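/- arXiv:2308.01968 — 8 statements merged into one kernel-verified Lean document; each statement's English description precedes it below -/
import Mathlib

section
/- For any involution h and any element g of a group G, and any natural number n ≥ 1, the iterated commutator satisfies [g,_{n+1} h] = [g,h]^{(-2)^n}, where [g,_1 h] = [g,h] and [g,_{k+1} h] = [[g,_k h], h]. -/
/-- The commutator `[x, y] = x⁻¹ y⁻¹ x y`. -/
def pcomm {G : Type*} [Group G] (x y : G) : G := x⁻¹ * y⁻¹ * x * y

/-- The iterated (Engel) commutator `[g,_n h]`: `[g,_0 h] = g`,
`[g,_{n+1} h] = [[g,_n h], h]`. -/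
def engel {G : Type*} [Group G] (g h : G) : ℕ → G
  | 0 => g
  | n + 1 => pcomm (engel g h n) h

lemma pcomm_zpow {G : Type*} [Group G] (g h : G) (hh : h ^ 2 = 1) (k : ℤ) :
    pcomm (pcomm g h ^ k) h = pcomm g h ^ (-2 * k) := by
  have hinv : h⁻¹ = h := by
    rw [inv_eq_iff_mul_eq_one, ← sq, hh]
  have hc : h * pcomm g h * h⁻¹ = (pcomm g h)⁻¹ := by
    simp only [pcomm, hinv, mul_inv_rev, inv_inv]
    have hhh : h * h = 1 := by rw [← sq, hh]
    calc h * (g⁻¹ * h * g * h) * h = (h * g⁻¹ * h * g) * (h * h) := by group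
      _ = h * g⁻¹ * h * g := by rw [hhh, mul_one]
      _ = h * (g⁻¹ * (h * g)) := by group
  have hck : h * pcomm g h ^ k * h⁻¹ = pcomm g h ^ (-k) := by
    rw [← conj_zpow, hc, inv_zpow, zpow_neg]
  calc pcomm (pcomm g h ^ k) h
      = (pcomm g h ^ k)⁻¹ * (h * pcomm g h ^ k * h⁻¹) := by
        simp only [pcomm, hinv]; group
    _ = pcomm g h ^ (-2 * k) := by
        rw [hck, ← zpow_neg, ← zpow_add]; ring_nf

/-- For any involution `h` and any `g` in a group `G`, and any `n ≥ 1`,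
`[g,_{n+1} h] = [g,h]^{(-2)^n}`. -/
theorem stmt0 {G : Type*} [Group G] (g h : G) (hh : h ^ 2 = 1) (n : ℕ) (hn : 1 ≤ n) :
    engel g h (n + 1) = pcomm g h ^ ((-2 : ℤ) ^ n) := by
  induction n, hn using Nat.le_induction with
  | base =>
      show pcomm (pcomm (engel g h 0) h) h = _
      have : engel g h 0 = g := rfl
      rw [this]
      have := pcomm_zpow g h hh 1
      simpa using this
  | succ n hn ih =>
      show pcomm (engel g h (n + 1)) h = _
      rw [ih, pcomm_zpow g h hh]
      congr 1
      ring
end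

section
/- In a group G in which every element has order dividing 2^k for some fixed k (a 2-group of bounded exponent), every involution h is a left Engel element: for every g ∈ G there exists n such that [g,_n h] = 1. -/
/-- In a group in which every element has order dividing `2^k` (a `2`-group of
bounded exponent), every involution `h` is a left Engel element: for every `g`
there exists `n` with `[g,_n h] = 1`. -/
theorem stmt1 {G : Type*} [Group G] (k : ℕ) (hexp : ∀ x : G, x ^ (2 ^ k) = 1)
    (h : G) (hh : h ^ 2 = 1) :
    ∀ g : G, ∃ n : ℕ, engel g h n = 1 := by
  intro g
  have hh2 : h * h = 1 := by rw [← pow_two]; exact hh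
  have hinv : h⁻¹ = h := inv_eq_of_mul_eq_one_right hh2
  set a : G := pcomm g h with ha
  have conj : h⁻¹ * a * h = a⁻¹ := by
    simp only [ha, pcomm, hinv, mul_inv_rev, inv_inv, mul_assoc, hh2, mul_one]
  have conjz : ∀ z : ℤ, h⁻¹ * a ^ z * h = a ^ (-z) := by
    intro z
    have hc := conj_zpow (i := z) (a := h⁻¹) (b := a)
    simp only [inv_inv] at hc
    rw [← hc, conj, inv_zpow']
  have key : ∀ z : ℤ, pcomm (a ^ z) h = a ^ (-2 * z) := by
    intro z
    have : pcomm (a ^ z) h = (a ^ z)⁻¹ * (h⁻¹ * a ^ z * h) := by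
      simp [pcomm, mul_assoc]
    rw [this, conjz, ← zpow_neg]
    rw [← zpow_add]
    ring_nf
  have main : ∀ m : ℕ, engel g h (m + 1) = a ^ ((-2 : ℤ) ^ m) := by
    intro m
    induction m with
    | zero => simp [engel, ha]
    | succ n ih =>
      show pcomm (engel g h (n + 1)) h = _
      rw [ih, key]
      congr 1
      ring
  refine ⟨k + 1, ?_⟩
  rw [main k]
  have h1 : a ^ ((2 : ℤ) ^ k) = 1 := by
    have h2 := hexp a
    rw [show ((2 : ℤ) ^ k) = ((2 ^ k : ℕ) : ℤ) by push_cast; ring, zpow_natCast]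
    exact h2
  have : ((-2 : ℤ)) ^ k = (2 : ℤ) ^ k * (-1) ^ k := by
    rw [neg_pow]; ring
  rw [this, zpow_mul, h1, one_zpow]
end

section
/- Let G and T be groups with T acting on a finite set X, and let W = G ≀_X T be the wreath product (base group G^X). Let g = (g_x), h_1 = (h_{1,x}), …, h_k = (h_{k,x}) ∈ G^X and t_1,…,t_k ∈ T. For any x' ∈ X denote by O(x') the orbit of x' under ⟨t_1,…,t_k⟩. Then for any m, the iterated identity w_{∘m}(g, h_1 t_1, …, h_k t_k) = 1 in W if and only if for every x' ∈ X, w_{∘m}((g_x)_{x∈O(x')}, (h_{1,x})_{x∈O(x')} t_1, …, (h_{k,x})_{x∈O(x')} t_k) = 1 in G ≀_{O(x')} ⟨t_1,…,t_k⟩, provided T is an n-Engel-w group and m ≥ n. -/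
/-- The word map defined by `w ∈ F_{k+1}`. -/
def wApply {G : Type*} [Group G] {k : ℕ} (w : FreeGroup (Fin (k + 1))) (g : G)
    (h : Fin k → G) : G :=
  FreeGroup.lift (Fin.cases g h) w

/-- The Engel-type iterated identity. -/
def wIter {G : Type*} [Group G] {k : ℕ} (w : FreeGroup (Fin (k + 1))) :
    ℕ → G → (Fin k → G) → G
  | 0, g, _ => g
  | n + 1, g, h => wApply w (wIter w n g h) h

/-- The permutation action of the top group on the base group `G^X` of the
permutational wreath product. -/
def wreathφ (G T X : Type*) [Group G] [Group T] [MulAction T X] :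
    T →* MulAut (X → G) where
  toFun t :=
    { toFun := fun f x => f (t⁻¹ • x)
      invFun := fun f x => f (t • x)
      left_inv := fun f => funext fun x => by simp
      right_inv := fun f => funext fun x => by simp
      map_mul' := fun f g => rfl }
  map_one' := MulEquiv.ext fun f => funext fun x => by simp
  map_mul' := fun a b => MulEquiv.ext fun f => funext fun x => by
    simp [mul_smul]

/-- The permutational wreath product `G ≀_X T = G^X ⋊ T`. -/
abbrev Wreath (G T X : Type*) [Group G] [Group T] [MulAction T X] :=
  (X → G) ⋊[wreathφ G T X] T

theorem wApply_map {G H : Type*} [Group G] [Group H] (φ : G →* H) {k : ℕ}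
    (w : FreeGroup (Fin (k + 1))) (g : G) (h : Fin k → G) :
    φ (wApply w g h) = wApply w (φ g) (fun i => φ (h i)) := by
  show (φ.comp (FreeGroup.lift (Fin.cases g h))) w = _
  unfold wApply
  congr 1
  apply FreeGroup.ext_hom
  intro i
  simp only [MonoidHom.comp_apply, FreeGroup.lift_apply_of]
  induction i using Fin.cases <;> simp

theorem wIter_map {G H : Type*} [Group G] [Group H] (φ : G →* H) {k : ℕ}
    (w : FreeGroup (Fin (k + 1))) (m : ℕ) (g : G) (h : Fin k → G) :
    φ (wIter w m g h) = wIter w m (φ g) (fun i => φ (h i)) := by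
  induction m with
  | zero => rfl
  | succ a ih => simp only [wIter, wApply_map, ih]

theorem wIter_add {G : Type*} [Group G] {k : ℕ} (w : FreeGroup (Fin (k + 1)))
    (a b : ℕ) (g : G) (h : Fin k → G) :
    wIter w (b + a) g h = wIter w a (wIter w b g h) h := by
  induction a with
  | zero => rfl
  | succ a ih =>
    show wApply w (wIter w (b + a) g h) h = wApply w (wIter w a (wIter w b g h) h) h
    rw [ih]

def wreathIncl (G : Type*) {T X : Type*} [Group G] [Group T] [MulAction T X] (S : Subgroup T) :
    Wreath G S X →* Wreath G T X :=
  SemidirectProduct.lift SemidirectProduct.inl (SemidirectProduct.inr.comp S.subtype)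
    (fun s => MonoidHom.ext fun f => by
      show SemidirectProduct.inl (wreathφ G S X s f) = _
      rw [show wreathφ G S X s f = wreathφ G T X (↑s) f from rfl,
        SemidirectProduct.inl_aut]
      simp [MulAut.conj_apply])

def wreathRes (G : Type*) {T X Y : Type*} [Group G] [Group T] [MulAction T X] [MulAction T Y]
    (p : Y → X) (hp : ∀ (s : T) (y : Y), p (s • y) = s • p y) :
    Wreath G T X →* Wreath G T Y :=
  SemidirectProduct.lift
    (SemidirectProduct.inl.comp (Pi.monoidHom fun y => Pi.evalMonoidHom (fun _ => G) (p y)))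
    SemidirectProduct.inr
    (fun s => MonoidHom.ext fun f => by
      have key : (fun y => (wreathφ G T X s f) (p y)) = wreathφ G T Y s (fun y => f (p y)) := by
        funext y
        show f (s⁻¹ • p y) = f (p (s⁻¹ • y))
        rw [hp]
      show SemidirectProduct.inl (fun y => (wreathφ G T X s f) (p y)) = _
      rw [key, SemidirectProduct.inl_aut]
      simp [MulAut.conj_apply]
      rfl)


/-- Checking the iterated identity `w_{∘m}` on elements `g·(h₁t₁)⋯` of a wreath
product `G ≀_X T` (with `T` an `n`-Engel-`w` group and `m ≥ n`) reduces to
checking it on each orbit of `X` under `⟨t₁, …, t_k⟩`. -/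
theorem stmt6 {k : ℕ} (w : FreeGroup (Fin (k + 1))) (G T X : Type*) [Group G] [Group T]
    [Fintype X] [MulAction T X] (n m : ℕ)
    (hT : ∀ (x : T) (y : Fin k → T), wIter w n x y = 1) (hmn : n ≤ m)
    (g : X → G) (h : Fin k → X → G) (t : Fin k → T) :
    wIter w m (SemidirectProduct.inl g : Wreath G T X)
        (fun i => SemidirectProduct.inl (h i) * SemidirectProduct.inr (t i)) = 1 ↔
      ∀ x' : X,
        wIter w m
          (SemidirectProduct.inl
              (fun y : MulAction.orbit (Subgroup.closure (Set.range t)) x' => g y) :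
            Wreath G (Subgroup.closure (Set.range t))
              (MulAction.orbit (Subgroup.closure (Set.range t)) x'))
          (fun i =>
            (SemidirectProduct.inl (fun y : MulAction.orbit (Subgroup.closure (Set.range t)) x' => h i y) :
              Wreath G (Subgroup.closure (Set.range t))
                (MulAction.orbit (Subgroup.closure (Set.range t)) x')) *
              SemidirectProduct.inr
                (⟨t i, Subgroup.subset_closure (Set.mem_range_self i)⟩ :
                  Subgroup.closure (Set.range t))) = 1 := by
  set S := Subgroup.closure (Set.range t) with hS
  set t' : Fin k → S := fun i => ⟨t i, Subgroup.subset_closure (Set.mem_range_self i)⟩ with ht'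
  -- the law holds for iterate `m` as well
  have hTm : ∀ (x : T) (y : Fin k → T), wIter w m x y = 1 := by
    intro x y
    obtain ⟨d, hd⟩ := Nat.exists_eq_add_of_le hmn
    rw [hd, Nat.add_comm, wIter_add]
    exact hT _ _
  have hSm : ∀ (x : S) (y : Fin k → S), wIter w m x y = 1 := by
    intro x y
    apply Subtype.val_injective
    have h1 := wIter_map S.subtype w m x y
    simp only [Subgroup.coe_subtype] at h1 ⊢
    rw [h1, hTm]
    rfl
  set e : Wreath G S X := wIter w m (SemidirectProduct.inl g)
      (fun i => SemidirectProduct.inl (h i) * SemidirectProduct.inr (t' i)) with he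
  -- the right component of `e` is trivial
  have her : e.right = 1 := by
    have h1 := wIter_map (SemidirectProduct.rightHom) w m
      (SemidirectProduct.inl g : Wreath G S X)
      (fun i => SemidirectProduct.inl (h i) * SemidirectProduct.inr (t' i))
    simp only [map_mul, SemidirectProduct.rightHom_inl, SemidirectProduct.rightHom_inr,
      one_mul] at h1
    rw [hSm] at h1
    exact h1
  have he1 : SemidirectProduct.inl e.left = e := by
    conv_rhs => rw [← SemidirectProduct.inl_left_mul_inr_right e]
    rw [her, map_one, mul_one]
  -- LHS is the image of `e` under the inclusion
  have hι : wreathIncl G S e = wIter w m (SemidirectProduct.inl g : Wreath G T X)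
      (fun i => SemidirectProduct.inl (h i) * SemidirectProduct.inr (t i)) := by
    rw [he, wIter_map]
    congr 1
    · simp [wreathIncl]
    · funext i
      simp [wreathIncl, map_mul]
      rfl
  -- RHS elements are images of `e` under restrictions
  have hπ : ∀ x' : X,
      wreathRes G (Subtype.val : MulAction.orbit S x' → X)
        (fun s y => MulAction.orbit.coe_smul) e =
      wIter w m
        (SemidirectProduct.inl (fun y : MulAction.orbit S x' => g y) :
          Wreath G S (MulAction.orbit S x'))
        (fun i =>
          SemidirectProduct.inl (fun y : MulAction.orbit S x' => h i y) *
            SemidirectProduct.inr (t' i)) := by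
    intro x'
    rw [he, wIter_map]
    congr 1
    · simp [wreathRes]
      rfl
    · funext i
      simp [wreathRes, map_mul]
      rfl
  constructor
  · intro hL x'
    rw [← hπ x']
    have : wreathIncl G S e = 1 := by rw [hι, hL]
    rw [← he1] at this
    simp only [wreathIncl, SemidirectProduct.lift_inl] at this
    have hl : e.left = 1 := SemidirectProduct.inl_injective this
    rw [← he1, hl, map_one, map_one]
  · intro hR
    rw [← hι, ← he1]
    have hl : e.left = 1 := by
      funext x
      have h1 := hR x
      rw [← hπ x, ← he1] at h1
      simp only [wreathRes, SemidirectProduct.lift_inl, MonoidHom.comp_apply] at h1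
      have h2 := SemidirectProduct.inl_injective h1
      have h3 := congrFun h2 ⟨x, MulAction.mem_orbit_self x⟩
      exact h3
    rw [hl, map_one, map_one]
end

section
/- Let p be a prime, r ∈ ℕ, and let C = ⟨σ⟩ be a cyclic group of order p^r acting faithfully and transitively on X = {1,…,p^r}. Let G be a group and W = G ≀_X C. Suppose g_1,…,g_{p^r}, h_1,…,h_{p^r} ∈ G pairwise commute and each g_i has order dividing p. Then [(g_x)_{x∈X},_{p^r} (h_x)_{x∈X} σ] = 1 in W, where [a,_n b] denotes the n-fold iterated commutator. -/
/-! ### Auxiliary lemmas -/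

/-- Coefficient `(-1)^(n-k) * (n choose k)`. -/
def ecoef (n k : ℕ) : ℤ := (-1) ^ (n - k) * (n.choose k : ℤ)

lemma ecoef_rec (n k : ℕ) :
    ecoef (n + 1) k = -ecoef n k + (if k = 0 then 0 else ecoef n (k - 1)) := by
  rcases k with _ | k
  · simp [ecoef, pow_succ]
  simp only [Nat.succ_ne_zero, if_neg, Nat.add_sub_cancel]
  rcases lt_or_ge (k + 1) (n + 1) with hk | hk
  · have h2 : n + 1 - (k + 1) = (n - (k + 1)) + 1 := by omega
    have h3 : n - k = (n - (k + 1)) + 1 := by omega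
    rw [ecoef, ecoef, ecoef, Nat.choose_succ_succ, h2, h3]
    push_cast
    ring
  · rcases eq_or_lt_of_le hk with he | hl
    · have hkn : k = n := by omega
      subst hkn
      simp [ecoef, Nat.choose_succ_self, Nat.choose_self]
    · have h1 : n < k := by omega
      have h2 : n < k + 1 := by omega
      simp [ecoef, Nat.choose_eq_zero_of_lt, h1, h2, Nat.lt_succ_of_lt h1]

lemma ecoef_succ_self (n : ℕ) : ecoef n (n + 1) = 0 := by
  simp [ecoef, Nat.choose_succ_self]

lemma prod_step {M : Type*} [CommGroup M] (a : ℕ → M) (n : ℕ) :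
    (∏ k ∈ Finset.range (n + 1), a k ^ ecoef n k)⁻¹ *
      ∏ k ∈ Finset.range (n + 1), a (k + 1) ^ ecoef n k
      = ∏ k ∈ Finset.range (n + 2), a k ^ ecoef (n + 1) k := by
  have h1 : (∏ k ∈ Finset.range (n + 1), a k ^ ecoef n k)⁻¹
      = ∏ k ∈ Finset.range (n + 2), a k ^ (-ecoef n k) := by
    rw [Finset.prod_range_succ (f := fun k => a k ^ (-ecoef n k)), ecoef_succ_self]
    simp [Finset.prod_inv_distrib, zpow_neg]
  have h2 : (∏ k ∈ Finset.range (n + 1), a (k + 1) ^ ecoef n k)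
      = ∏ k ∈ Finset.range (n + 2), a k ^ (if k = 0 then 0 else ecoef n (k - 1)) := by
    rw [Finset.prod_range_succ' (f := fun k => a k ^ (if k = 0 then 0 else ecoef n (k - 1)))]
    simp
  rw [h1, h2, ← Finset.prod_mul_distrib]
  refine Finset.prod_congr rfl fun k _ => ?_
  rw [← zpow_add, ← ecoef_rec]

/-- The closed formula `(S-1)^{p^r} ≡ S^{p^r} - 1 mod p` applied to exponents. -/
lemma final_aux {M : Type*} [CommGroup M] (p r : ℕ) (hp : p.Prime) (a : ℕ → M)
    (ha : ∀ k, a k ^ p = 1) (hper : a (p ^ r) = a 0) :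
    ∏ k ∈ Finset.range (p ^ r + 1), a k ^ ecoef (p ^ r) k = 1 := by
  have hNpos : 0 < p ^ r := pow_pos hp.pos r
  have hmid : ∀ b ∈ Finset.range (p ^ r), b ≠ 0 → a b ^ ecoef (p ^ r) b = 1 := by
    intro b hb hb0
    obtain ⟨m, hm⟩ : (p : ℤ) ∣ ecoef (p ^ r) b := by
      refine Dvd.dvd.mul_left ?_ _
      exact_mod_cast Int.natCast_dvd_natCast.2
        (Nat.Prime.dvd_choose_pow hp hb0 (Finset.mem_range.1 hb).ne)
    rw [hm, zpow_mul, zpow_natCast, ha, one_zpow]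
  have hlast : a (p ^ r) ^ ecoef (p ^ r) (p ^ r) = a 0 := by
    rw [hper, ecoef, Nat.sub_self, Nat.choose_self]
    simp
  rw [Finset.prod_range_succ, hlast,
    Finset.prod_eq_single_of_mem 0 (Finset.mem_range.2 hNpos) hmid]
  have h0 : a 0 ^ ecoef (p ^ r) 0 = a 0 ^ ((-1 : ℤ) ^ (p ^ r)) := by
    rw [ecoef, Nat.sub_zero, Nat.choose_zero_right]
    simp
  rw [h0]
  rcases Nat.even_or_odd (p ^ r) with he | ho
  · have hp2 : p = 2 := by
      rcases Nat.even_pow.mp he with ⟨hpe, -⟩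
      exact (Nat.Prime.even_iff hp).mp hpe
    rw [he.neg_one_pow, zpow_one, ← pow_two, ← hp2, ha]
  · rw [ho.neg_one_pow, zpow_neg_one, inv_mul_cancel]

@[simp] lemma wreathφ_apply {G T X : Type*} [Group G] [Group T] [MulAction T X]
    (t : T) (f : X → G) (x : X) : wreathφ G T X t f x = f (t⁻¹ • x) := rfl

lemma pcomm_wreath {G T X : Type*} [Group G] [Group T] [MulAction T X]
    (f h : X → G) (σ : T) (hfh : ∀ x, Commute (f x) (h x)) :
    pcomm (SemidirectProduct.inl f : Wreath G T X)
        (SemidirectProduct.inl h * SemidirectProduct.inr σ)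
      = SemidirectProduct.inl (fun x => (f x)⁻¹ * f (σ • x)) := by
  ext x
  · simp only [pcomm, SemidirectProduct.mul_left, SemidirectProduct.mul_right,
      SemidirectProduct.inv_left, SemidirectProduct.inv_right,
      SemidirectProduct.left_inl, SemidirectProduct.right_inl,
      SemidirectProduct.left_inr, SemidirectProduct.right_inr,
      map_one, map_mul, map_inv, MulAut.one_apply, one_mul, mul_one, inv_one]
    simp only [← map_inv, Pi.mul_apply, Pi.inv_apply, wreathφ_apply, inv_inv]
    rw [mul_assoc, mul_assoc, (hfh (σ • x)).eq, inv_mul_cancel_left]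
  · simp [pcomm]

/-- The closed formula for the iterated commutator in the wreath product, when the
base entries of the first element and of the second element all commute. -/
lemma engel_wreath {G C X : Type*} [Group G] [Group C] [MulAction C X]
    {M : Type*} [CommGroup M] (ι : M →* G) (g' : X → M) (h : X → G) (σ : C)
    (hgh : ∀ (m : M) (x : X), Commute (ι m) (h x)) (n : ℕ) :
    engel (SemidirectProduct.inl (fun x => ι (g' x)) : Wreath G C X)
        (SemidirectProduct.inl h * SemidirectProduct.inr σ) n
      = SemidirectProduct.inl
          (fun x => ι (∏ k ∈ Finset.range (n + 1), g' (σ ^ k • x) ^ ecoef n k)) := by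
  induction n with
  | zero =>
    simp only [engel]
    congr 1
    funext x
    simp [ecoef]
  | succ n ih =>
    simp only [engel]
    rw [ih, pcomm_wreath _ _ _ (fun x => hgh _ x)]
    congr 1
    funext x
    have hshift : (∏ k ∈ Finset.range (n + 1), g' (σ ^ k • (σ • x)) ^ ecoef n k)
        = ∏ k ∈ Finset.range (n + 1), g' (σ ^ (k + 1) • x) ^ ecoef n k := by
      refine Finset.prod_congr rfl fun k _ => ?_
      rw [pow_succ, mul_smul]
    rw [← map_inv, ← map_mul, hshift, prod_step (fun k => g' (σ ^ k • x)) n]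

/-- Let `C = ⟨σ⟩` be cyclic of order `p^r` acting faithfully and transitively on
a set `X` of size `p^r`, and `W = G ≀_X C`. If `g_x, h_x ∈ G` (`x ∈ X`) pairwise
commute and each `g_x` has order dividing `p`, then
`[(g_x)_x,_{p^r} (h_x)_x σ] = 1` in `W`. -/
theorem stmt7 (p r : ℕ) (hp : p.Prime) (G : Type*) [Group G] (C : Type*) [Group C]
    (X : Type*) [Fintype X] [MulAction C X] [FaithfulSMul C X]
    (htrans : MulAction.IsPretransitive C X) (hcard : Fintype.card X = p ^ r)
    (σ : C) (hgen : ∀ c : C, c ∈ Subgroup.zpowers σ) (hord : orderOf σ = p ^ r)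
    (g h : X → G)
    (hcomm : ∀ a b : X, Commute (g a) (g b) ∧ Commute (g a) (h b) ∧ Commute (h a) (h b))
    (hordg : ∀ x : X, g x ^ p = 1) :
    engel (SemidirectProduct.inl g : Wreath G C X)
      (SemidirectProduct.inl h * SemidirectProduct.inr σ) (p ^ r) = 1 := by
  classical
  set S : Set G := Set.range g ∪ Set.range h with hS
  have hScomm : ∀ a ∈ S, ∀ b ∈ S, a * b = b * a := by
    rintro a (⟨x, rfl⟩ | ⟨x, rfl⟩) b (⟨y, rfl⟩ | ⟨y, rfl⟩)
    · exact (hcomm x y).1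
    · exact (hcomm x y).2.1
    · exact ((hcomm y x).2.1).symm
    · exact (hcomm x y).2.2
  letI instM : CommGroup (Subgroup.closure S) := Subgroup.closureCommGroupOfComm hScomm
  have hgA : ∀ x, g x ∈ Subgroup.closure S := fun x => Subgroup.subset_closure (Or.inl ⟨x, rfl⟩)
  have hhA : ∀ x, h x ∈ Subgroup.closure S := fun x => Subgroup.subset_closure (Or.inr ⟨x, rfl⟩)
  have hAcomm : ∀ a (_ : a ∈ Subgroup.closure S) b (_ : b ∈ Subgroup.closure S),
      Commute a b := fun a ha b hb => by
    have := mul_comm (⟨a, ha⟩ : Subgroup.closure S) ⟨b, hb⟩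
    have h2 := congrArg Subtype.val this
    exact h2
  let ι : (Subgroup.closure S) →* G :=
    { toFun := Subtype.val, map_one' := rfl, map_mul' := fun _ _ => rfl }
  let g' : X → (Subgroup.closure S) := fun x => ⟨g x, hgA x⟩
  have hgh : ∀ (m : (Subgroup.closure S)) (x : X), Commute (ι m) (h x) :=
    fun m x => hAcomm _ m.2 _ (hhA x)
  have hgeq : g = fun x => ι (g' x) := rfl
  rw [hgeq, engel_wreath ι g' h σ hgh (p ^ r)]
  have hσN : σ ^ (p ^ r) = 1 := by rw [← hord]; exact pow_orderOf_eq_one σ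
  have hfin : ∀ x : X,
      (∏ k ∈ Finset.range (p ^ r + 1), g' (σ ^ k • x) ^ ecoef (p ^ r) k) = 1 := by
    intro x
    refine final_aux p r hp (fun k => g' (σ ^ k • x)) (fun k => ?_) ?_
    · have : (g' (σ ^ k • x) ^ p : G) = 1 := by
        simpa using hordg (σ ^ k • x)
      exact Subtype.ext this
    · simp [hσN]
  have : (fun x => ι (∏ k ∈ Finset.range (p ^ r + 1), g' (σ ^ k • x) ^ ecoef (p ^ r) k))
      = (1 : X → G) := by
    funext x
    rw [hfin x, map_one]
    rfl
  rw [this, map_one]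
end

section
/- Let G be a group, X = {1,…,m} with σ the m-cycle acting on X, and W = G ≀_X ⟨σ⟩. For any g ∈ G, n ∈ ℕ, and coordinate j ∈ X, the j-th component of the iterated commutator [(g, 1, …, 1),_n σ] in the base group equals a product of powers of g of the form ∏_i g^{(±1)·binom(n, index)} with exponents given by signed binomial coefficients; in particular, if g has order p and m = p^r, then [(g⁻¹, 1, …, 1),_{p^r} σ] = 1. -/
namespace Stmt8Aux

lemma pcomm_inl_inr {N T : Type*} [Group N] [Group T] (φ : T →* MulAut N) (f : N) (t : T) :
    pcomm (SemidirectProduct.inl f : N ⋊[φ] T) (SemidirectProduct.inr t) =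
      SemidirectProduct.inl (f⁻¹ * φ t⁻¹ f) := by
  ext <;> simp [pcomm]

/-- Exponent of `g` at coordinate `j` after `n` iterations. -/
def dd (m n : ℕ) (j : ZMod m) : ℤ :=
  ∑ k ∈ Finset.range (n + 1),
    if ((k : ZMod m) + j = 0) then (-1) ^ (n + k) * (n.choose k : ℤ) else 0

lemma dd_zero (m : ℕ) (j : ZMod m) : dd m 0 j = if j = 0 then 1 else 0 := by
  simp [dd]

lemma dd_succ (m n : ℕ) (j : ZMod m) : dd m (n + 1) j = dd m n (j + 1) - dd m n j := by
  set G : ℕ → ℤ := fun k =>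
    if ((k : ZMod m) + j = 0) then (-1) ^ (n + k) * (n.choose k : ℤ) else 0 with hG
  have hGk : ∀ k : ℕ, G k = if ((k : ZMod m) + j = 0) then (-1) ^ (n + k) * (n.choose k : ℤ) else 0 :=
    fun k => rfl
  have hGsum : ∑ k ∈ Finset.range (n + 1), G (k + 1) = dd m n j - G 0 := by
    have h1 : ∑ k ∈ Finset.range (n + 2), G k
        = ∑ k ∈ Finset.range (n + 1), G (k + 1) + G 0 := Finset.sum_range_succ' G (n + 1)
    have h2 : ∑ k ∈ Finset.range (n + 2), G k = dd m n j := by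
      rw [Finset.sum_range_succ]
      have : G (n + 1) = 0 := by rw [hGk]; simp [Nat.choose_succ_self]
      rw [this, add_zero]; rfl
    linarith
  have hterm : ∀ k : ℕ,
      (if (((k + 1 : ℕ) : ZMod m) + j = 0) then
          (-1 : ℤ) ^ (n + 1 + (k + 1)) * ((n + 1).choose (k + 1) : ℤ) else 0)
      = (if ((k : ZMod m) + (j + 1) = 0) then (-1 : ℤ) ^ (n + k) * (n.choose k : ℤ) else 0)
        + (- G (k + 1)) := by
    intro k
    have hc1 : (((k + 1 : ℕ) : ZMod m) + j = 0) ↔ ((k : ZMod m) + (j + 1) = 0) := by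
      push_cast
      constructor <;> intro h <;> linear_combination h
    by_cases h : ((k : ZMod m) + (j + 1) = 0)
    · rw [if_pos ((hc1).2 h), if_pos h, hGk (k + 1), if_pos ((hc1).2 h)]
      push_cast [Nat.choose_succ_succ]
      ring
    · rw [if_neg (fun hh => h ((hc1).1 hh)), if_neg h, hGk (k + 1),
        if_neg (fun hh => h ((hc1).1 hh))]
      ring
  have expand : dd m (n + 1) j
      = ∑ k ∈ Finset.range (n + 1),
          (if (((k + 1 : ℕ) : ZMod m) + j = 0) then
            (-1 : ℤ) ^ (n + 1 + (k + 1)) * ((n + 1).choose (k + 1) : ℤ) else 0)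
        + (if (((0 : ℕ) : ZMod m) + j = 0) then
            (-1 : ℤ) ^ (n + 1 + 0) * ((n + 1).choose 0 : ℤ) else 0) := by
    rw [dd]
    exact Finset.sum_range_succ' _ (n + 1)
  rw [expand, Finset.sum_congr rfl (fun k _ => hterm k), Finset.sum_add_distrib]
  have e1 : ∑ k ∈ Finset.range (n + 1),
      (if ((k : ZMod m) + (j + 1) = 0) then (-1 : ℤ) ^ (n + k) * (n.choose k : ℤ) else 0)
      = dd m n (j + 1) := rfl
  have e2 : ∑ k ∈ Finset.range (n + 1), (- G (k + 1)) = -(dd m n j - G 0) := by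
    rw [Finset.sum_neg_distrib, hGsum]
  have e3 : (if (((0 : ℕ) : ZMod m) + j = 0) then
      (-1 : ℤ) ^ (n + 1 + 0) * ((n + 1).choose 0 : ℤ) else 0) = - G 0 := by
    rw [hGk 0]
    by_cases h : (((0 : ℕ) : ZMod m) + j = 0)
    · rw [if_pos h, if_pos h]
      simp only [Nat.choose_zero_right, Nat.cast_one, mul_one]
      ring
    · rw [if_neg h, if_neg h]; ring
  rw [e1, e2, e3]
  ring

lemma engel_left (m : ℕ) (G : Type*) [Group G] (g : G) (n : ℕ) :
    engel (SemidirectProduct.inl (fun x : ZMod m => if x = 0 then g else 1) :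
        Wreath G (Multiplicative (ZMod m)) (ZMod m))
      (SemidirectProduct.inr (Multiplicative.ofAdd (1 : ZMod m))) n =
    SemidirectProduct.inl (fun j => g ^ dd m n j) := by
  induction n with
  | zero =>
    show (SemidirectProduct.inl _ : Wreath G (Multiplicative (ZMod m)) (ZMod m)) = _
    congr 1
    funext j
    rw [dd_zero]
    split <;> simp
  | succ n ih =>
    show pcomm _ _ = _
    rw [ih, pcomm_inl_inr]
    congr 1
    have hφ : (wreathφ G (Multiplicative (ZMod m)) (ZMod m))
        ((Multiplicative.ofAdd (1 : ZMod m))⁻¹) (fun j : ZMod m => g ^ dd m n j)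
        = fun j => g ^ dd m n (1 + j) := by
      funext x
      show g ^ dd m n ((((Multiplicative.ofAdd (1 : ZMod m))⁻¹)⁻¹) • x) = _
      rw [inv_inv]
      rfl
    rw [hφ]
    funext j
    show (g ^ dd m n j)⁻¹ * g ^ dd m n (1 + j) = g ^ dd m (n + 1) j
    have : dd m (n + 1) j = -dd m n j + dd m n (1 + j) := by
      rw [dd_succ, add_comm 1 j]; ring
    rw [this, zpow_add, zpow_neg]

lemma list_prod_zpow {G : Type*} [Group G] (g : G) (l : List ℤ) :
    (l.map (fun e => g ^ e)).prod = g ^ l.sum := by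
  induction l with
  | nil => simp
  | cons a l ih => simp [ih, zpow_add]

lemma sum_filter_list {α M : Type*} [AddCommMonoid M] (p : α → Bool) (e : α → M) (l : List α) :
    ((l.filter p).map e).sum = (l.map (fun k => if p k then e k else 0)).sum := by
  induction l with
  | nil => rfl
  | cons a l ih => by_cases h : p a <;> simp [List.filter_cons, h, ih]

lemma list_range_map_sum {M : Type*} [AddCommMonoid M] (e : ℕ → M) (n : ℕ) :
    ((List.range n).map e).sum = ∑ k ∈ Finset.range n, e k := by
  induction n with
  | zero => rfl
  | succ n ih =>
    rw [List.range_succ, Finset.sum_range_succ, List.map_append, List.sum_append, ih]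
    simp

end Stmt8Aux

open Stmt8Aux in
/-- In `W = G ≀_X ⟨σ⟩` with `σ` the `m`-cycle on `X = ℤ/mℤ` (acting by
translation), each component of `[(g, 1, …, 1),_n σ]` is a product of powers of
`g` with signed binomial coefficient exponents; in particular, if `g^p = 1` and
`m = p^r`, then `[(g⁻¹, 1, …, 1),_{p^r} σ] = 1`. -/
theorem stmt8 (m : ℕ) (hm : 0 < m) (G : Type*) [Group G] (g : G) :
    (∀ (n : ℕ) (j : ZMod m), ∃ (s : ℕ) (ks : Fin s → ℕ) (ε : Fin s → ℤ),
      (∀ i, ε i = 1 ∨ ε i = -1) ∧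
      (engel
          (SemidirectProduct.inl (fun x : ZMod m => if x = 0 then g else 1) :
            Wreath G (Multiplicative (ZMod m)) (ZMod m))
          (SemidirectProduct.inr (Multiplicative.ofAdd (1 : ZMod m))) n).left j =
        (List.ofFn fun i : Fin s => g ^ (ε i * (n.choose (ks i) : ℤ))).prod) ∧
    (∀ p r : ℕ, p.Prime → g ^ p = 1 → m = p ^ r →
      engel
          (SemidirectProduct.inl (fun x : ZMod m => if x = 0 then g⁻¹ else 1) :
            Wreath G (Multiplicative (ZMod m)) (ZMod m))
          (SemidirectProduct.inr (Multiplicative.ofAdd (1 : ZMod m))) (p ^ r) = 1) := by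
  constructor
  · intro n j
    set L : List ℕ :=
      (List.range (n + 1)).filter (fun k => decide (((k : ZMod m) + j = 0))) with hL
    set e : ℕ → ℤ := fun k => (-1) ^ (n + k) * (n.choose k : ℤ) with he
    refine ⟨L.length, fun i => L.get i, fun i => (-1) ^ (n + L.get i), ?_, ?_⟩
    · intro i
      rcases Nat.even_or_odd (n + L.get i) with h | h
      · exact Or.inl h.neg_one_pow
      · exact Or.inr h.neg_one_pow
    · rw [engel_left, SemidirectProduct.left_inl]
      have h1 : (List.ofFn fun i : Fin L.length =>
          g ^ ((-1) ^ (n + L.get i) * (n.choose (L.get i) : ℤ)))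
          = L.map (fun k => g ^ e k) := by
        conv_rhs => rw [← List.ofFn_get L, List.map_ofFn]
        rfl
      have h2 : L.map (fun k => g ^ e k) = (L.map e).map (fun x : ℤ => g ^ x) :=
        List.map_map.symm
      rw [h1, h2, list_prod_zpow]
      congr 1
      rw [hL, sum_filter_list, list_range_map_sum, dd]
      refine Finset.sum_congr rfl (fun k _ => ?_)
      simp only [decide_eq_true_eq, he]
  · intro p r hp hg hmr
    subst hmr
    rw [engel_left]
    have hN : 0 < p ^ r := pow_pos hp.pos r
    haveI : NeZero p := ⟨hp.ne_zero⟩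
    have hz : ∀ j : ZMod (p ^ r), g⁻¹ ^ dd (p ^ r) (p ^ r) j = 1 := by
      intro j
      set f : ℕ → ZMod p := fun k =>
        if ((k : ZMod (p ^ r)) + j = 0) then
          (-1) ^ (p ^ r + k) * ((p ^ r).choose k : ZMod p) else 0 with hf
      have hcast : ((dd (p ^ r) (p ^ r) j : ℤ) : ZMod p)
          = ∑ k ∈ Finset.range (p ^ r + 1), f k := by
        rw [dd, Int.cast_sum]
        refine Finset.sum_congr rfl (fun k _ => ?_)
        rw [apply_ite (Int.cast : ℤ → ZMod p)]
        push_cast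
        rfl
      have hmid : ∑ k ∈ Finset.range (p ^ r), f k = f 0 := by
        refine Finset.sum_eq_single_of_mem 0 (Finset.mem_range.2 hN) (fun b hb hb0 => ?_)
        have hbN : b ≠ p ^ r := Nat.ne_of_lt (Finset.mem_range.1 hb)
        have hzc : (((p ^ r).choose b : ℕ) : ZMod p) = 0 :=
          (ZMod.natCast_eq_zero_iff _ _).2 (hp.dvd_choose_pow hb0 hbN)
        simp only [hf]
        split
        · rw [hzc, mul_zero]
        · rfl
      have hkey : ((-1 : ZMod p)) ^ (p ^ r) + 1 = 0 := by
        rcases hp.eq_two_or_odd' with h2 | hodd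
        · subst h2
          have h21 : (-1 : ZMod 2) = 1 := by decide
          rw [h21, one_pow]
          decide
        · have hoddN : Odd (p ^ r) := hodd.pow
          rw [hoddN.neg_one_pow]
          ring
      have hsum : ∑ k ∈ Finset.range (p ^ r + 1), f k = 0 := by
        rw [Finset.sum_range_succ, hmid]
        simp only [hf, Nat.cast_zero, zero_add, ZMod.natCast_self, Nat.choose_zero_right,
          Nat.choose_self, Nat.cast_one, mul_one, add_zero]
        by_cases hj : j = 0
        · rw [if_pos hj, if_pos hj]
          have hev : ((-1 : ZMod p)) ^ (p ^ r + p ^ r) = 1 := Even.neg_one_pow ⟨p ^ r, rfl⟩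
          rw [hev]
          exact hkey
        · rw [if_neg hj, if_neg hj, add_zero]
      have hdvd : (p : ℤ) ∣ dd (p ^ r) (p ^ r) j := by
        rw [← ZMod.intCast_zmod_eq_zero_iff_dvd, hcast, hsum]
      obtain ⟨c, hc⟩ := hdvd
      rw [hc, zpow_mul]
      have hp1 : (g⁻¹ : G) ^ ((p : ℕ) : ℤ) = 1 := by
        rw [zpow_natCast, inv_pow, hg, inv_one]
      rw [hp1, one_zpow]
    have h1 : (fun j : ZMod (p ^ r) => g⁻¹ ^ dd (p ^ r) (p ^ r) j)
        = (1 : ZMod (p ^ r) → G) := by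
      funext j
      rw [Pi.one_apply]
      exact hz j
    rw [h1, map_one]
end

section
/- Let (A_i)_{i∈ℕ} be a sequence of elementary abelian p-groups, and define W_0 = 1 and W_{n+1} = W_n ≀ A_n (permutational wreath product with A_n acting on itself by right multiplication). Then W_n is a ((p^n − 1)/(p − 1))-Engel group: [g,_{(p^n−1)/(p−1)} h] = 1 for all g, h ∈ W_n. -/
/-- The action of the top group `T` (acting on itself by right multiplication)
on the base group `T → G` of the permutational wreath product `G ≀ T`. -/
def wreathRφ (G T : Type*) [Group G] [Group T] : T →* MulAut (T → G) where
  toFun t :=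
    { toFun := fun f x => f (x * t)
      invFun := fun f x => f (x * t⁻¹)
      left_inv := fun f => funext fun x => by simp
      right_inv := fun f => funext fun x => by simp
      map_mul' := fun f g => rfl }
  map_one' := MulEquiv.ext fun f => funext fun x => by simp
  map_mul' := fun a b => MulEquiv.ext fun f => funext fun x => by
    simp [mul_assoc]

/-- The iterated permutational wreath products `W_0 = 1`,
`W_{n+1} = W_n ≀ A_n` (bundled with their group structures). -/
def Wrec (A : ℕ → Type) [∀ i, CommGroup (A i)] : ℕ → (T : Type) ×' Group T :=
  fun n =>
    Nat.rec (motive := fun _ => (T : Type) ×' Group T)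
      ⟨PUnit, inferInstance⟩
      (fun n ih =>
        letI := ih.2
        ⟨(A n → ih.1) ⋊[wreathRφ ih.1 (A n)] A n, inferInstance⟩) n

/-- The `n`-fold iterated permutational wreath product of `A_0, …, A_{n-1}`. -/
def W (A : ℕ → Type) [∀ i, CommGroup (A i)] (n : ℕ) : Type := (Wrec A n).1

noncomputable instance (A : ℕ → Type) [∀ i, CommGroup (A i)] (n : ℕ) :
    Group (W A n) := (Wrec A n).2

namespace Engel9

variable {Wg : Type*} [Group Wg]

lemma pcomm_mul_right (a u v : Wg) :
    pcomm a (u * v) = pcomm a v * (v⁻¹ * pcomm a u * v) := by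
  simp [pcomm]; group

/-- One step of a `p`-central-rel-`c` chain. -/
structure StepCond (p : ℕ) (c : Wg) (N N' : Subgroup Wg) : Prop where
  le : N' ≤ N
  comm : ∀ x ∈ N, ∀ y ∈ N, pcomm x y ∈ N'
  pow : ∀ x ∈ N, x ^ p ∈ N'
  engc : ∀ x ∈ N, pcomm x c ∈ N'
  engci : ∀ x ∈ N, pcomm x c⁻¹ ∈ N'

/-- Existence, for each `c`, of a suitable chain of length `m`. -/
def Qu (Wg : Type*) [Group Wg] (p m : ℕ) : Prop :=
  ∀ c : Wg, ∃ N : ℕ → Subgroup Wg, N 0 = ⊤ ∧ N m = ⊥ ∧ ∀ j, StepCond p c (N j) (N (j+1))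

theorem engel_of_Qu {p m : ℕ} (h : Qu Wg p m) (g c : Wg) : engel g c m = 1 := by
  obtain ⟨N, h0, hm, hstep⟩ := h c
  have key : ∀ k, engel g c k ∈ N k := by
    intro k
    induction k with
    | zero => rw [h0]; exact Subgroup.mem_top g
    | succ k ih => exact (hstep k).engc _ ih
  have := key m
  rwa [hm, Subgroup.mem_bot] at this



lemma end_sum_apply {A : Type*} [AddCommGroup A] (s : Finset ℕ) (f : ℕ → AddMonoid.End A) (a : A) :
    (∑ m ∈ s, f m) a = ∑ m ∈ s, f m a := by
  classical
  induction s using Finset.induction with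
  | empty => simp
  | insert _ _ h ih => rw [Finset.sum_insert h, Finset.sum_insert h, ← ih]; rfl

lemma end_pow_vanish {A : Type*} [AddCommGroup A] (p : ℕ) (hp : p.Prime)
    (htors : ∀ a : A, p • a = 0) (σ : AddMonoid.End A) (hσ : ∀ a, (σ ^ p) a = a) :
    ∀ a, ((σ - 1) ^ p) a = 0 := by
  intro a
  have hc : Commute σ (-1 : AddMonoid.End A) := (Commute.one_right σ).neg_right
  rw [sub_eq_add_neg, hc.add_pow, end_sum_apply]
  have hterm : ∀ m ∈ Finset.range (p+1), m ≠ 0 → m ≠ p →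
      (σ^m * (-1 : AddMonoid.End A)^(p-m) * (p.choose m : AddMonoid.End A)) a = 0 := by
    intro m hm hm0 hmp
    have hmlt : m < p := lt_of_le_of_ne (Nat.lt_succ_iff.mp (Finset.mem_range.mp hm)) hmp
    obtain ⟨d, hd⟩ := hp.dvd_choose_self hm0 hmlt
    have h0 : ((p.choose m : ℕ) : AddMonoid.End A) a = 0 := by
      rw [AddMonoid.End.natCast_apply, hd, mul_comm, mul_smul, htors]
      simp
    show (σ^m) (((-1 : AddMonoid.End A)^(p-m)) (((p.choose m : ℕ) : AddMonoid.End A) a)) = 0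
    rw [h0]; simp
  have hsplit : ∑ m ∈ Finset.range (p+1),
      (σ^m * (-1 : AddMonoid.End A)^(p-m) * (p.choose m : AddMonoid.End A)) a
      = (σ^0 * (-1 : AddMonoid.End A)^(p-0) * (p.choose 0 : AddMonoid.End A)) a
      + (σ^p * (-1 : AddMonoid.End A)^(p-p) * (p.choose p : AddMonoid.End A)) a := by
    rw [Finset.sum_range_succ]
    congr 1
    rw [Finset.sum_eq_single_of_mem 0 (Finset.mem_range.mpr (Nat.pos_of_ne_zero hp.ne_zero))]
    intro m hm hm0
    exact hterm m (Finset.mem_range.mpr (Nat.lt_succ_of_lt (Finset.mem_range.mp hm))) hm0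
      (Nat.ne_of_lt (Finset.mem_range.mp hm))
  rw [hsplit]
  have h1 : (σ^p * (-1 : AddMonoid.End A)^(p-p) * (p.choose p : AddMonoid.End A)) a = a := by
    simp [Nat.choose_self]
    exact hσ a
  have h0 : (σ^0 * (-1 : AddMonoid.End A)^(p-0) * (p.choose 0 : AddMonoid.End A)) a
      = ((-1 : AddMonoid.End A)^p) a := by simp
  rw [h0, h1]
  rcases hp.eq_two_or_odd' with h2 | hodd
  · subst h2
    have he : ((-1 : AddMonoid.End A)^2) a = a := by simp
    rw [he]
    have := htors a
    rwa [two_smul] at this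
  · rw [hodd.neg_one_pow]
    show -a + a = 0
    simp

/-- The Engel operator relative to `c`. -/
def Dc (c : Wg) (x : Wg) : Wg := pcomm x c

lemma Dc_one (c : Wg) : Dc c 1 = 1 := by simp [Dc, pcomm]

lemma Dc_iter_one (c : Wg) (r : ℕ) : (Dc c)^[r] 1 = 1 := by
  induction r with
  | zero => rfl
  | succ r ih => rw [Function.iterate_succ_apply', ih, Dc_one]

lemma comm_pow_vanish {V : Type*} [CommGroup V] (p : ℕ) (hp : p.Prime)
    (htors : ∀ v : V, v ^ p = 1) (σ : V →* V) (hσ : ∀ v, σ^[p] v = v) :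
    ∀ v : V, (fun w => w⁻¹ * σ w)^[p] v = 1 := by
  let σE : AddMonoid.End (Additive V) := MonoidHom.toAdditive σ
  have hEiter : ∀ (f : AddMonoid.End (Additive V)) (k : ℕ) (a : Additive V),
      (f ^ k) a = f^[k] a := by
    intro f k
    induction k with
    | zero => intro a; rfl
    | succ k ih =>
      intro a
      rw [pow_succ', Function.iterate_succ_apply']
      show f ((f^k) a) = _
      rw [ih]
  have htorsA : ∀ a : Additive V, p • a = 0 := by
    intro a
    apply Additive.toMul.injective
    rw [toMul_nsmul, toMul_zero]
    exact htors _
  have hσEit : ∀ (k : ℕ) (a : Additive V),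
      σE^[k] a = Additive.ofMul (σ^[k] (Additive.toMul a)) := by
    intro k
    induction k with
    | zero => intro a; rfl
    | succ k ih =>
      intro a
      rw [Function.iterate_succ_apply', Function.iterate_succ_apply', ih]
      rfl
  have hσE : ∀ a : Additive V, (σE ^ p) a = a := by
    intro a
    rw [hEiter, hσEit, hσ]
    rfl
  have main := end_pow_vanish p hp htorsA σE hσE
  intro v
  have hrel : ∀ (k : ℕ) (w : V),
      (fun w => w⁻¹ * σ w)^[k] w = Additive.toMul (((σE - 1)^k) (Additive.ofMul w)) := by
    intro k
    induction k with
    | zero => intro w; rfl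
    | succ k ih =>
      intro w
      rw [Function.iterate_succ_apply', ih]
      have hs : ((σE - 1)^(k+1)) (Additive.ofMul w) = (σE - 1) (((σE - 1)^k) (Additive.ofMul w)) := by
        rw [pow_succ']
        rfl
      rw [hs]
      set X := ((σE - 1)^k) (Additive.ofMul w) with hX
      show (Additive.toMul X)⁻¹ * σ (Additive.toMul X) = Additive.toMul (σE X - X)
      rw [toMul_sub]
      have h1 : Additive.toMul (σE X) = σ (Additive.toMul X) := rfl
      rw [h1, div_eq_mul_inv, mul_comm]
  rw [hrel p v, main]
  rfl


structure PHyp (p : ℕ) (c : Wg) (B B' : Subgroup Wg) : Prop where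
  le : B' ≤ B
  comm : ∀ x ∈ B, ∀ y ∈ B, pcomm x y ∈ B'
  pow : ∀ x ∈ B, x ^ p ∈ B'
  conjB : ∀ x ∈ B, c⁻¹ * x * c ∈ B
  conjiB : ∀ x ∈ B, c * x * c⁻¹ ∈ B
  conjB' : ∀ x ∈ B', c⁻¹ * x * c ∈ B'
  conjiB' : ∀ x ∈ B', c * x * c⁻¹ ∈ B'
  hol : ∀ x ∈ B, pcomm x (c ^ p) ∈ B'

variable {p : ℕ} {c : Wg} {B B' : Subgroup Wg}

namespace PHyp

variable (H : PHyp p c B B')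
include H

lemma normB' : ∀ x ∈ B', ∀ g ∈ B, g⁻¹ * x * g ∈ B' := by
  intro x hx g hg
  have h1 : x * pcomm x g ∈ B' := mul_mem hx (H.comm x (H.le hx) g hg)
  have h2 : g⁻¹ * x * g = x * pcomm x g := by simp [pcomm]; group
  rwa [h2]

lemma DcB : ∀ x ∈ B, Dc c x ∈ B := by
  intro x hx
  have h : Dc c x = x⁻¹ * (c⁻¹ * x * c) := by simp [Dc, pcomm, mul_assoc]
  rw [h]; exact mul_mem (inv_mem hx) (H.conjB x hx)

lemma DcB' : ∀ x ∈ B', Dc c x ∈ B' := by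
  intro x hx
  have h : Dc c x = x⁻¹ * (c⁻¹ * x * c) := by simp [Dc, pcomm, mul_assoc]
  rw [h]; exact mul_mem (inv_mem hx) (H.conjB' x hx)

lemma Dc_iter_B : ∀ (r : ℕ), ∀ x ∈ B, (Dc c)^[r] x ∈ B := by
  intro r
  induction r with
  | zero => intro x hx; exact hx
  | succ r ih => intro x hx; rw [Function.iterate_succ_apply']; exact H.DcB _ (ih x hx)

lemma Dc_iter_B' : ∀ (r : ℕ), ∀ x ∈ B', (Dc c)^[r] x ∈ B' := by
  intro r
  induction r with
  | zero => intro x hx; exact hx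
  | succ r ih => intro x hx; rw [Function.iterate_succ_apply']; exact H.DcB' _ (ih x hx)

lemma Dc_congr : ∀ x ∈ B, ∀ b ∈ B', ∃ b' ∈ B', Dc c (x * b) = Dc c x * b' := by
  intro x hx b hb
  refine ⟨(Dc c x)⁻¹ * b⁻¹ * Dc c x * (c⁻¹ * b * c), ?_, ?_⟩
  · refine mul_mem ?_ (H.conjB' b hb)
    have := H.normB' b⁻¹ (inv_mem hb) (Dc c x) (H.DcB x hx)
    simpa [mul_assoc] using this
  · simp [Dc, pcomm]; group

lemma Dc_iter_congr : ∀ (r : ℕ), ∀ x ∈ B, ∀ b ∈ B',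
    ∃ b' ∈ B', (Dc c)^[r] (x * b) = (Dc c)^[r] x * b' := by
  intro r
  induction r with
  | zero => intro x hx b hb; exact ⟨b, hb, rfl⟩
  | succ r ih =>
    intro x hx b hb
    obtain ⟨b1, hb1, he1⟩ := ih x hx b hb
    obtain ⟨b2, hb2, he2⟩ := H.Dc_congr _ (H.Dc_iter_B r x hx) b1 hb1
    refine ⟨b2, hb2, ?_⟩
    rw [Function.iterate_succ_apply', Function.iterate_succ_apply', he1, he2]

lemma Dc_mul : ∀ x ∈ B, ∀ y ∈ B, ∃ b ∈ B', Dc c (x * y) = Dc c x * Dc c y * b := by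
  intro x hx y hy
  have hmem : (Dc c y)⁻¹ * pcomm (Dc c x) y * Dc c y ∈ B' :=
    H.normB' _ (H.comm _ (H.DcB x hx) y hy) _ (H.DcB y hy)
  refine ⟨_, hmem, ?_⟩
  simp [Dc, pcomm]; group

lemma Dc_iter_mul : ∀ (r : ℕ), ∀ x ∈ B, ∀ y ∈ B,
    ∃ b ∈ B', (Dc c)^[r] (x * y) = (Dc c)^[r] x * (Dc c)^[r] y * b := by
  intro r
  induction r with
  | zero => intro x hx y hy; exact ⟨1, one_mem _, by simp⟩
  | succ r ih =>
    intro x hx y hy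
    obtain ⟨b1, hb1, he1⟩ := ih x hx y hy
    obtain ⟨b2, hb2, he2⟩ :=
      H.Dc_congr _ (mul_mem (H.Dc_iter_B r x hx) (H.Dc_iter_B r y hy)) b1 hb1
    obtain ⟨b3, hb3, he3⟩ := H.Dc_mul _ (H.Dc_iter_B r x hx) _ (H.Dc_iter_B r y hy)
    refine ⟨b3 * b2, mul_mem hb3 hb2, ?_⟩
    rw [Function.iterate_succ_apply', Function.iterate_succ_apply',
      Function.iterate_succ_apply', he1, he2, he3]
    simp [mul_assoc]

lemma Dc_inv : ∀ x ∈ B, ∃ b ∈ B', Dc c x⁻¹ = (Dc c x)⁻¹ * b := by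
  intro x hx
  have hP : pcomm x⁻¹ (c⁻¹ * x * c) ∈ B' := H.comm _ (inv_mem hx) _ (H.conjB x hx)
  have hmem : Dc c x * pcomm x⁻¹ (c⁻¹ * x * c) * (Dc c x)⁻¹ ∈ B' := by
    have := H.normB' _ hP (Dc c x)⁻¹ (inv_mem (H.DcB x hx))
    simpa [mul_assoc] using this
  refine ⟨_, hmem, ?_⟩
  simp [Dc, pcomm]; group

lemma Dc_iter_inv : ∀ (r : ℕ), ∀ x ∈ B,
    ∃ b ∈ B', (Dc c)^[r] x⁻¹ = ((Dc c)^[r] x)⁻¹ * b := by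
  intro r
  induction r with
  | zero => intro x hx; exact ⟨1, one_mem _, by simp⟩
  | succ r ih =>
    intro x hx
    obtain ⟨b1, hb1, he1⟩ := ih x hx
    obtain ⟨b2, hb2, he2⟩ := H.Dc_congr _ (inv_mem (H.Dc_iter_B r x hx)) b1 hb1
    obtain ⟨b3, hb3, he3⟩ := H.Dc_inv _ (H.Dc_iter_B r x hx)
    refine ⟨b3 * b2, mul_mem hb3 hb2, ?_⟩
    rw [Function.iterate_succ_apply', Function.iterate_succ_apply', he1, he2, he3]
    simp [mul_assoc]

/-- `pcomm x c⁻¹` in terms of `Dc`. -/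
lemma pcomm_inv_mem : ∀ x ∈ B, Dc c x ∈ B' → pcomm x c⁻¹ ∈ B' := by
  intro x _ hD
  have h : pcomm x c⁻¹ = c * (Dc c x)⁻¹ * c⁻¹ := by simp [Dc, pcomm]; group
  rw [h]
  exact H.conjiB' _ (inv_mem hD)

theorem Dc_pow_p (hp : p.Prime) : ∀ x ∈ B, (Dc c)^[p] x ∈ B' := by
  classical
  haveI hN : (B'.subgroupOf B).Normal := by
    constructor
    intro n hn g
    rw [Subgroup.mem_subgroupOf] at hn ⊢
    have h1 : pcomm (g:Wg)⁻¹ (n:Wg)⁻¹ ∈ B' := H.comm _ (inv_mem g.2) _ (inv_mem (H.le hn))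
    have h2 : ((g * n * g⁻¹ : ↥B) : Wg) = pcomm (g:Wg)⁻¹ (n:Wg)⁻¹ * (n:Wg) := by
      push_cast
      simp only [pcomm]; group
    rw [h2]
    exact mul_mem h1 hn
  have hVcomm : ∀ a b : ↥B ⧸ B'.subgroupOf B, a * b = b * a := by
    intro a b
    induction a using QuotientGroup.induction_on with
    | H x =>
    induction b using QuotientGroup.induction_on with
    | H y =>
    rw [← QuotientGroup.mk_mul, ← QuotientGroup.mk_mul, QuotientGroup.eq]
    rw [Subgroup.mem_subgroupOf]
    have h : (((x * y)⁻¹ * (y * x) : ↥B) : Wg) = pcomm (y:Wg) (x:Wg) := by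
      push_cast; simp [pcomm]; group
    rw [h]
    exact (H.comm _ y.2 _ x.2)
  -- conjugation
  let σB : ↥B →* ↥B :=
    { toFun := fun x => ⟨c⁻¹ * ↑x * c, H.conjB _ x.2⟩
      map_one' := by ext; simp
      map_mul' := by intro x y; ext; push_cast; group }
  have hσBcoe : ∀ (k : ℕ) (x : ↥B), ((σB^[k] x : ↥B) : Wg) = (c^k)⁻¹ * ↑x * c^k := by
    intro k
    induction k with
    | zero => intro x; simp
    | succ k ih =>
      intro x
      rw [Function.iterate_succ_apply']
      show c⁻¹ * ↑(σB^[k] x) * c = _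
      rw [ih, pow_succ]
      group
  let σV : (↥B ⧸ B'.subgroupOf B) →* (↥B ⧸ B'.subgroupOf B) :=
    QuotientGroup.map _ _ σB (by
      intro x hx
      rw [Subgroup.mem_comap, Subgroup.mem_subgroupOf] at *
      exact H.conjB' _ hx)
  have hσVmk : ∀ (k : ℕ) (x : ↥B),
      σV^[k] (QuotientGroup.mk x) = QuotientGroup.mk (σB^[k] x) := by
    intro k
    induction k with
    | zero => intro x; rfl
    | succ k ih =>
      intro x
      rw [Function.iterate_succ_apply', Function.iterate_succ_apply', ih]
      exact QuotientGroup.map_mk _ _ _ _ _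
  have hVpow : ∀ v : ↥B ⧸ B'.subgroupOf B, v ^ p = 1 := by
    intro v
    induction v using QuotientGroup.induction_on with
    | H x =>
    rw [← QuotientGroup.mk_pow, QuotientGroup.eq_one_iff, Subgroup.mem_subgroupOf]
    push_cast
    exact H.pow _ x.2
  have hσVp : ∀ v : ↥B ⧸ B'.subgroupOf B, σV^[p] v = v := by
    intro v
    induction v using QuotientGroup.induction_on with
    | H x =>
    rw [hσVmk, QuotientGroup.eq]
    rw [Subgroup.mem_subgroupOf]
    have h : (((σB^[p] x)⁻¹ * x : ↥B) : Wg) = (pcomm (x:Wg) (c^p))⁻¹ := by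
      push_cast
      rw [hσBcoe]
      simp [pcomm]; group
    rw [h]
    exact inv_mem (H.hol _ x.2)
  -- apply the module lemma
  letI : CommGroup (↥B ⧸ B'.subgroupOf B) :=
    { (inferInstance : Group (↥B ⧸ B'.subgroupOf B)) with mul_comm := hVcomm }
  have hP := comm_pow_vanish p hp hVpow σV hσVp
  -- Engel operator downstairs
  intro x hx
  let DB : ↥B → ↥B := fun y => ⟨Dc c ↑y, H.DcB _ y.2⟩
  have hDBcoe : ∀ (k : ℕ) (y : ↥B), ((DB^[k] y : ↥B) : Wg) = (Dc c)^[k] ↑y := by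
    intro k
    induction k with
    | zero => intro y; rfl
    | succ k ih =>
      intro y
      rw [Function.iterate_succ_apply', Function.iterate_succ_apply']
      show Dc c ↑(DB^[k] y) = _
      rw [ih]
  have hbr : ∀ y : ↥B, (QuotientGroup.mk (DB y) : ↥B ⧸ B'.subgroupOf B)
      = (QuotientGroup.mk y : ↥B ⧸ B'.subgroupOf B)⁻¹ * σV (QuotientGroup.mk y) := by
    intro y
    have h1 : DB y = y⁻¹ * σB y := by
      ext
      push_cast
      show Dc c (y:Wg) = (y:Wg)⁻¹ * (c⁻¹ * (y:Wg) * c)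
      simp [Dc, pcomm, mul_assoc]
    rw [h1, QuotientGroup.mk_mul, QuotientGroup.mk_inv, QuotientGroup.map_mk]
  have hiter : ∀ (k : ℕ) (y : ↥B), (QuotientGroup.mk (DB^[k] y) : ↥B ⧸ B'.subgroupOf B)
      = (fun w => w⁻¹ * σV w)^[k] (QuotientGroup.mk y) := by
    intro k
    induction k with
    | zero => intro y; rfl
    | succ k ih =>
      intro y
      rw [Function.iterate_succ_apply', Function.iterate_succ_apply', ← ih, hbr]
  have hfin : (QuotientGroup.mk (DB^[p] ⟨x, hx⟩) : ↥B ⧸ B'.subgroupOf B) = 1 := by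
    rw [hiter]
    exact hP _
  rw [QuotientGroup.eq_one_iff, Subgroup.mem_subgroupOf] at hfin
  rwa [hDBcoe] at hfin

end PHyp

section KbSection

lemma StepCond.mono {N N' N'' : Subgroup Wg} (h : StepCond p c N N') (h1 : N' ≤ N'')
    (h2 : N'' ≤ N) : StepCond p c N N'' where
  le := h2
  comm := fun x hx y hy => h1 (h.comm x hx y hy)
  pow := fun x hx => h1 (h.pow x hx)
  engc := fun x hx => h1 (h.engc x hx)
  engci := fun x hx => h1 (h.engci x hx)


lemma Dc_conj_c (z : Wg) : Dc c (c * z * c⁻¹) = c * Dc c z * c⁻¹ := by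
  simp [Dc, pcomm]; group

lemma Dc_iter_conj_c (r : ℕ) (z : Wg) : (Dc c)^[r] (c * z * c⁻¹) = c * (Dc c)^[r] z * c⁻¹ := by
  induction r with
  | zero => rfl
  | succ r ih => rw [Function.iterate_succ_apply', Function.iterate_succ_apply', ih, Dc_conj_c]


namespace PHyp

variable (H : PHyp p c B B')

/-- The kernel filtration between `B` and `B'`. -/
def Kb (H : PHyp p c B B') (r : ℕ) : Subgroup Wg where
  carrier := {x | x ∈ B ∧ (Dc c)^[r] x ∈ B'}
  one_mem' := ⟨one_mem _, by rw [Dc_iter_one]; exact one_mem _⟩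
  mul_mem' := by
    rintro a b ⟨haB, haD⟩ ⟨hbB, hbD⟩
    refine ⟨mul_mem haB hbB, ?_⟩
    obtain ⟨b1, hb1, he⟩ := H.Dc_iter_mul r a haB b hbB
    rw [he]
    exact mul_mem (mul_mem haD hbD) hb1
  inv_mem' := by
    rintro a ⟨haB, haD⟩
    refine ⟨inv_mem haB, ?_⟩
    obtain ⟨b1, hb1, he⟩ := H.Dc_iter_inv r a haB
    rw [he]
    exact mul_mem (inv_mem haD) hb1

lemma mem_Kb {x : Wg} {r : ℕ} : x ∈ Kb H r ↔ x ∈ B ∧ (Dc c)^[r] x ∈ B' := Iff.rfl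

lemma Kb_le (r : ℕ) : Kb H r ≤ B := fun _ hx => hx.1

lemma le_Kb (r : ℕ) : B' ≤ Kb H r := fun x hx => ⟨H.le hx, H.Dc_iter_B' r x hx⟩

lemma Kb_p_eq (hp : p.Prime) : Kb H p = B := by
  ext x
  exact ⟨fun hx => hx.1, fun hx => ⟨hx, H.Dc_pow_p hp x hx⟩⟩

lemma step_Kb (r : ℕ) : StepCond p c (Kb H (r+1)) (Kb H r) where
  le := by
    rintro x ⟨hxB, hxD⟩
    exact ⟨hxB, by rw [Function.iterate_succ_apply']; exact H.DcB' _ hxD⟩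
  comm := by
    rintro x ⟨hxB, _⟩ y ⟨hyB, _⟩
    exact le_Kb H r (H.comm x hxB y hyB)
  pow := by
    rintro x ⟨hxB, _⟩
    exact le_Kb H r (H.pow x hxB)
  engc := by
    rintro x ⟨hxB, hxD⟩
    refine ⟨H.DcB x hxB, ?_⟩
    rw [show (Dc c)^[r] (pcomm x c) = (Dc c)^[r+1] x from (Function.iterate_succ_apply (Dc c) r x).symm]
    exact hxD
  engci := by
    rintro x ⟨hxB, hxD⟩
    have hu : Dc c x ∈ B := H.DcB x hxB
    have hform : pcomm x c⁻¹ = c * (Dc c x)⁻¹ * c⁻¹ := by simp [Dc, pcomm]; group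
    constructor
    · rw [hform]
      exact H.conjiB _ (inv_mem hu)
    · rw [hform, Dc_iter_conj_c]
      obtain ⟨b1, hb1, he⟩ := H.Dc_iter_inv r _ hu
      rw [he]
      refine H.conjiB' _ (mul_mem (inv_mem ?_) hb1)
      rw [show (Dc c)^[r] (Dc c x) = (Dc c)^[r+1] x from (Function.iterate_succ_apply (Dc c) r x).symm]
      exact hxD

lemma step_bottom : StepCond p c (Kb H 1) B' where
  le := le_Kb H 1
  comm := by rintro x ⟨hxB, _⟩ y ⟨hyB, _⟩; exact H.comm x hxB y hyB
  pow := by rintro x ⟨hxB, _⟩; exact H.pow x hxB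
  engc := by
    rintro x ⟨_, hxD⟩
    rwa [Function.iterate_one] at hxD
  engci := by
    rintro x ⟨hxB, hxD⟩
    rw [Function.iterate_one] at hxD
    exact H.pcomm_inv_mem x hxB hxD


end PHyp
end KbSection

section WreathComp
variable {G T : Type*} [Group G] [CommGroup T]

local notation "Wr" => (T → G) ⋊[wreathRφ G T] T

lemma wr_mul_left_apply (a b : Wr) (x : T) :
    (a * b).left x = a.left x * b.left (x * a.right) := rfl

lemma wr_inv_left_apply (a : Wr) (x : T) :
    (a⁻¹).left x = (a.left (x * a.right⁻¹))⁻¹ := rfl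

lemma wr_mul_right (a b : Wr) : (a * b).right = a.right * b.right := rfl
lemma wr_inv_right (a : Wr) : (a⁻¹).right = a.right⁻¹ := rfl

lemma base_left_mul_apply {a : Wr} (b : Wr) (ha : a.right = 1) (x : T) :
    (a * b).left x = a.left x * b.left x := by
  rw [wr_mul_left_apply, ha, mul_one]

lemma base_left_inv_apply {a : Wr} (ha : a.right = 1) (x : T) :
    (a⁻¹).left x = (a.left x)⁻¹ := by
  rw [wr_inv_left_apply, ha, inv_one, mul_one]

lemma base_pcomm_right {a b : Wr} (ha : a.right = 1) (hb : b.right = 1) :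
    (pcomm a b).right = 1 := by
  show (a⁻¹ * b⁻¹ * a * b).right = 1
  simp [wr_mul_right, wr_inv_right, ha, hb]

lemma base_pcomm_left_apply {a b : Wr} (ha : a.right = 1) (hb : b.right = 1) (x : T) :
    (pcomm a b).left x = pcomm (a.left x) (b.left x) := by
  have hai : (a⁻¹).right = 1 := by rw [wr_inv_right, ha, inv_one]
  have hbi : (b⁻¹).right = 1 := by rw [wr_inv_right, hb, inv_one]
  have h1 : (a⁻¹ * b⁻¹).right = 1 := by rw [wr_mul_right, hai, hbi, mul_one]
  have h2 : (a⁻¹ * b⁻¹ * a).right = 1 := by rw [wr_mul_right, h1, ha, mul_one]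
  show (a⁻¹ * b⁻¹ * a * b).left x = _
  rw [base_left_mul_apply _ h2, base_left_mul_apply _ h1, base_left_mul_apply _ hai,
    base_left_inv_apply ha, base_left_inv_apply hb]
  rfl

lemma wr_pow_right (a : Wr) (k : ℕ) : (a ^ k).right = a.right ^ k := by
  induction k with
  | zero => simp
  | succ k ih => rw [pow_succ, pow_succ, wr_mul_right, ih]

lemma wr_pow_left_apply (a : Wr) (k : ℕ) (x : T) :
    (a ^ k).left x = ((List.range k).map (fun s => a.left (x * a.right ^ s))).prod := by
  induction k generalizing x with
  | zero => rfl
  | succ k ih =>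
    rw [pow_succ, wr_mul_left_apply, ih, wr_pow_right, List.range_succ, List.map_append,
      List.prod_append]
    simp

lemma base_pow_left_apply {a : Wr} (ha : a.right = 1) (k : ℕ) (x : T) :
    (a ^ k).left x = (a.left x) ^ k := by
  rw [wr_pow_left_apply]
  simp [ha]

lemma wr_conj_base_right {a : Wr} (c : Wr) (ha : a.right = 1) :
    (c⁻¹ * a * c).right = 1 := by
  simp [wr_mul_right, wr_inv_right, ha, mul_comm]

lemma wr_conji_base_right {a : Wr} (c : Wr) (ha : a.right = 1) :
    (c * a * c⁻¹).right = 1 := by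
  simp [wr_mul_right, wr_inv_right, ha, mul_comm]

lemma wr_conj_base_left_apply {a : Wr} (c : Wr) (ha : a.right = 1) (x : T) :
    (c⁻¹ * a * c).left x = (c.left (x * c.right⁻¹))⁻¹ * a.left (x * c.right⁻¹)
      * c.left (x * c.right⁻¹) := by
  have h1 : (c⁻¹ * a).right = c.right⁻¹ := by
    rw [wr_mul_right, wr_inv_right, ha, mul_one]
  rw [wr_mul_left_apply, wr_mul_left_apply, h1, wr_inv_left_apply, wr_inv_right, mul_assoc]

lemma wr_conji_base_left_apply {a : Wr} (c : Wr) (ha : a.right = 1) (x : T) :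
    (c * a * c⁻¹).left x = c.left x * a.left (x * c.right) * (c.left x)⁻¹ := by
  have h1 : (c * a).right = c.right := by rw [wr_mul_right, ha, mul_one]
  rw [wr_mul_left_apply, wr_mul_left_apply, h1, wr_inv_left_apply]
  simp

/-- The subgroup of base elements with prescribed pointwise memberships. -/
def basePart (M : T → Subgroup G) : Subgroup ((T → G) ⋊[wreathRφ G T] T) where
  carrier := {a | a.right = 1 ∧ ∀ x, a.left x ∈ M x}
  one_mem' := ⟨rfl, fun x => one_mem _⟩
  mul_mem' := by
    rintro a b ⟨ha1, ha2⟩ ⟨hb1, hb2⟩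
    refine ⟨by rw [wr_mul_right, ha1, hb1, mul_one], fun x => ?_⟩
    rw [base_left_mul_apply _ ha1]
    exact mul_mem (ha2 x) (hb2 x)
  inv_mem' := by
    rintro a ⟨ha1, ha2⟩
    refine ⟨by rw [wr_inv_right, ha1, inv_one], fun x => ?_⟩
    rw [base_left_inv_apply ha1]
    exact inv_mem (ha2 x)

lemma mem_basePart {M : T → Subgroup G} {a : Wr} :
    a ∈ basePart M ↔ a.right = 1 ∧ ∀ x, a.left x ∈ M x := Iff.rfl

lemma basePart_mono {M M' : T → Subgroup G} (h : ∀ x, M x ≤ M' x) :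
    basePart M ≤ basePart M' := by
  rintro a ⟨h1, h2⟩
  exact ⟨h1, fun x => h x (h2 x)⟩

lemma basePart_bot (M : T → Subgroup G) (h : ∀ x, M x = ⊥) :
    basePart M = ⊥ := by
  ext a
  simp only [mem_basePart, Subgroup.mem_bot]
  constructor
  · rintro ⟨h1, h2⟩
    refine SemidirectProduct.ext ?_ h1
    funext x
    have := h2 x
    rw [h x, Subgroup.mem_bot] at this
    exact this
  · rintro rfl
    exact ⟨rfl, fun x => one_mem _⟩

end WreathComp

section ConjSub
variable {G : Type*} [Group G]

def conjSub (g : G) (H : Subgroup G) : Subgroup G := H.map (MulAut.conj g⁻¹).toMonoidHom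

lemma mem_conjSub {g x : G} {H : Subgroup G} : x ∈ conjSub g H ↔ g * x * g⁻¹ ∈ H := by
  rw [conjSub, Subgroup.mem_map_equiv]
  simp [MulAut.conj]

lemma conjSub_conjSub (g₁ g₂ : G) (H : Subgroup G) :
    conjSub g₁ (conjSub g₂ H) = conjSub (g₂ * g₁) H := by
  ext x
  simp [mem_conjSub, mul_assoc]

lemma conjSub_one (H : Subgroup G) : conjSub 1 H = H := by
  ext x; simp [mem_conjSub]

lemma conjSub_top (g : G) : conjSub g (⊤ : Subgroup G) = ⊤ := by
  ext x; simp [mem_conjSub]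

lemma conjSub_bot (g : G) : conjSub g (⊥ : Subgroup G) = ⊥ := by
  ext x
  simp only [mem_conjSub, Subgroup.mem_bot]
  constructor
  · intro h
    have : x = g⁻¹ * (g * x * g⁻¹) * g := by group
    rw [this, h]; group
  · rintro rfl; group

lemma mem_conjSub_of (g : G) {H : Subgroup G} {y : G} (hy : y ∈ H) :
    g⁻¹ * y * g ∈ conjSub g H := by
  rw [mem_conjSub]
  have : g * (g⁻¹ * y * g) * g⁻¹ = y := by group
  rwa [this]

end ConjSub

section CF
variable {G : Type*} [Group G]
section ChainFacts
variable {p : ℕ} {cg : G} {N : ℕ → Subgroup G}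

lemma chain_conj_mem (hstep : ∀ j, StepCond p cg (N j) (N (j+1))) (j : ℕ) :
    ∀ a ∈ N j, cg⁻¹ * a * cg ∈ N j := by
  intro a ha
  have h1 : cg⁻¹ * a * cg = a * pcomm a cg := by simp [pcomm]; group
  rw [h1]
  exact mul_mem ha ((hstep j).le ((hstep j).engc a ha))

lemma chain_conji_mem (hstep : ∀ j, StepCond p cg (N j) (N (j+1))) (j : ℕ) :
    ∀ a ∈ N j, cg * a * cg⁻¹ ∈ N j := by
  intro a ha
  have h1 : cg * a * cg⁻¹ = a * pcomm a cg⁻¹ := by simp [pcomm]; group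
  rw [h1]
  exact mul_mem ha ((hstep j).le ((hstep j).engci a ha))

lemma chain_conjSub_eq (hstep : ∀ j, StepCond p cg (N j) (N (j+1))) (j : ℕ) :
    conjSub cg (N j) = N j := by
  ext x
  rw [mem_conjSub]
  constructor
  · intro h
    have h2 : x = cg⁻¹ * (cg * x * cg⁻¹) * cg := by group
    rw [h2]
    exact chain_conj_mem hstep j _ h
  · intro h
    exact chain_conji_mem hstep j x h

lemma chain_pcomm_pow (hstep : ∀ j, StepCond p cg (N j) (N (j+1))) (k j : ℕ) :
    ∀ a ∈ N j, pcomm a (cg ^ k) ∈ N (j+1) := by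
  induction k with
  | zero =>
    intro a _
    have : pcomm a (cg ^ 0) = 1 := by simp [pcomm]
    rw [this]; exact one_mem _
  | succ k ih =>
    intro a ha
    rw [pow_succ, pcomm_mul_right]
    exact mul_mem ((hstep j).engc a ha)
      (chain_conj_mem hstep (j+1) _ (ih a ha))

lemma chain_bot {m : ℕ} (hstep : ∀ j, StepCond p cg (N j) (N (j+1))) (hm : N m = ⊥) :
    ∀ j, m ≤ j → N j = ⊥ := by
  intro j hj
  induction j, hj using Nat.le_induction with
  | base => exact hm
  | succ n _ ih =>
    refine le_bot_iff.mp ?_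
    rw [← ih]
    exact (hstep n).le

end ChainFacts
end CF

section EPC
variable {G : Type*} [Group G]
theorem exists_pointchain {T : Type*} [CommGroup T] {p m : ℕ} (hp : p.Prime)
    (hT : ∀ u : T, u ^ p = 1) (IH : Qu G p m) (cc : (T → G) ⋊[wreathRφ G T] T) :
    ∃ NP : T → ℕ → Subgroup G,
      (∀ x, NP x 0 = ⊤) ∧
      (∀ x j, m ≤ j → NP x j = ⊥) ∧
      (∀ x j, NP x (j+1) ≤ NP x j) ∧
      (∀ x j, ∀ a ∈ NP x j, ∀ b ∈ NP x j, pcomm a b ∈ NP x (j+1)) ∧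
      (∀ x j, ∀ a ∈ NP x j, a ^ p ∈ NP x (j+1)) ∧
      (∀ x j, NP (x * cc.right) j = conjSub (cc.left x) (NP x j)) ∧
      (∀ x j, ∀ a ∈ NP x j, pcomm a ((cc ^ p).left x) ∈ NP x (j+1)) := by
  classical
  set t := cc.right with htdef
  set f := cc.left with hfdef
  choose Nch hN0 hNm hNstep using IH
  -- powers of t only matter mod p
  have tpow_mod : ∀ k : ℕ, t ^ k = t ^ (k % p) := by
    intro k
    conv_lhs => rw [← Nat.div_add_mod k p]
    rw [pow_add, pow_mul, hT, one_pow, one_mul]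
  -- the orbit setoid
  let sd : Setoid T :=
    { r := fun x y => ∃ k : ℕ, y = x * t ^ k
      iseqv := by
        constructor
        · intro x; exact ⟨0, by simp⟩
        · rintro x y ⟨k, rfl⟩
          refine ⟨k * (p - 1), ?_⟩
          rw [mul_assoc, ← pow_add]
          have he : k + k * (p-1) = k * p := by
            have h1 : (p - 1) + 1 = p := Nat.succ_pred_eq_of_pos hp.pos
            calc k + k * (p-1) = k * ((p-1) + 1) := by ring
            _ = k * p := by rw [h1]
          rw [he, pow_mul, hT, mul_one]
        · rintro x y z ⟨k, rfl⟩ ⟨l, rfl⟩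
          exact ⟨k + l, by rw [pow_add, mul_assoc]⟩ }
  let rp : T → T := fun x => (Quotient.mk sd x).out
  have hrp_rel : ∀ x, ∃ k : ℕ, x = rp x * t ^ k := by
    intro x
    have h1 : Quotient.mk sd (rp x) = Quotient.mk sd x := Quotient.out_eq _
    exact Quotient.exact h1
  have hrp_mul : ∀ (x : T) (k : ℕ), rp (x * t ^ k) = rp x := by
    intro x k
    have hrel : sd.r x (x * t ^ k) := ⟨k, rfl⟩
    have h1 : Quotient.mk sd (x * t ^ k) = Quotient.mk sd x :=
      (Quotient.sound hrel).symm
    show (Quotient.mk sd (x * t ^ k)).out = (Quotient.mk sd x).out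
    rw [h1]
  have hrp_self : ∀ x, rp (rp x) = rp x := by
    intro x
    obtain ⟨k, hk⟩ := hrp_rel x
    conv_rhs => rw [hk, hrp_mul]
  -- the distance function
  let ρf : T → ℕ := fun x => Nat.find (hrp_rel x)
  have hρ_spec : ∀ x, x = rp x * t ^ ρf x := fun x => Nat.find_spec (hrp_rel x)
  have hρ_lt : ∀ x, ρf x < p := by
    intro x
    obtain ⟨k, hk⟩ := hrp_rel x
    have hwit : x = rp x * t ^ (k % p) := by rw [← tpow_mod k]; exact hk
    exact lt_of_le_of_lt (Nat.find_le hwit) (Nat.mod_lt _ hp.pos)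
  have hρ_rp : ∀ x, ρf (rp x) = 0 := by
    intro x
    have : rp (rp x) * t ^ 0 = rp x := by rw [pow_zero, mul_one, hrp_self]
    exact Nat.find_eq_zero (hrp_rel (rp x)) |>.mpr this.symm
  -- partial holonomy words
  let ω : T → ℕ → G := fun y k => ((List.range k).map (fun s => f (y * t ^ s))).prod
  have hω_zero : ∀ y, ω y 0 = 1 := fun y => rfl
  have hω_succ : ∀ y k, ω y (k+1) = ω y k * f (y * t ^ k) := by
    intro y k
    show ((List.range (k+1)).map _).prod = _
    rw [List.range_succ, List.map_append, List.prod_append]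
    simp [ω]
  have hω_shift : ∀ y k, ω y (k+1) = f y * ω (y * t) k := by
    intro y k
    show ((List.range (k+1)).map _).prod = _
    rw [List.range_succ_eq_map, List.map_cons, List.prod_cons, List.map_map]
    congr 1
    · simp
    · show (List.map ((fun s => f (y * t ^ s)) ∘ Nat.succ) (List.range k)).prod = ω (y * t) k
      congr 1
      refine List.map_congr_left fun s _ => ?_
      show f (y * t ^ (s+1)) = f (y * t * t ^ s)
      rw [pow_succ', ← mul_assoc]
  -- holonomy
  let hol : T → G := fun y => ω y p
  have hhol_shift : ∀ y, hol (y * t) = (f y)⁻¹ * hol y * f y := by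
    intro y
    have h1 : f y * hol (y * t) = ω y (p + 1) := (hω_shift y p).symm
    have h2 : ω y (p+1) = hol y * f y := by
      rw [hω_succ, hT, mul_one]
    have h3 : f y * hol (y * t) = hol y * f y := h1.trans h2
    calc hol (y * t) = (f y)⁻¹ * (f y * hol (y * t)) := by group
    _ = (f y)⁻¹ * (hol y * f y) := by rw [h3]
    _ = (f y)⁻¹ * hol y * f y := by rw [mul_assoc]
  have hhol_accum : ∀ (y : T) (k : ℕ), hol (y * t ^ k) = (ω y k)⁻¹ * hol y * ω y k := by
    intro y k
    induction k with
    | zero => simp [hω_zero]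
    | succ k ih =>
      have h1 : y * t ^ (k+1) = (y * t ^ k) * t := by rw [pow_succ, mul_assoc]
      rw [h1, hhol_shift, ih, hω_succ]
      group
  have hhol_t1 : t = 1 → ∀ y, hol y = f y ^ p := by
    intro h1 y
    show ((List.range p).map (fun s => f (y * t ^ s))).prod = f y ^ p
    have h2 : ∀ s, f (y * t ^ s) = f y := by intro s; rw [h1, one_pow, mul_one]
    calc ((List.range p).map (fun s => f (y * t ^ s))).prod
        = ((List.range p).map (fun _ => f y)).prod := by
          congr 1
          exact List.map_congr_left fun s _ => h2 s
    _ = f y ^ p := by simp [List.map_const', List.prod_replicate]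
  -- order facts
  have htorder : t ≠ 1 → orderOf t = p := by
    intro h1
    rcases (Nat.Prime.eq_one_or_self_of_dvd hp _ (orderOf_dvd_of_pow_eq_one (hT t))) with h2 | h2
    · exact absurd (orderOf_eq_one_iff.mp h2) h1
    · exact h2
  have hpow_inj : t ≠ 1 → ∀ k l : ℕ, k < p → l < p → t ^ k = t ^ l → k = l := by
    intro h1 k l hk hl he
    have ho := htorder h1
    exact pow_injOn_Iio_orderOf (by rwa [Set.mem_Iio, ho]) (by rwa [Set.mem_Iio, ho]) he
  -- chain parameter and point chains
  let cpar : T → G := fun y => if t = 1 then f y else hol y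
  let NP : T → ℕ → Subgroup G :=
    fun x j => conjSub (ω (rp x) (ρf x)) (Nch (cpar (rp x)) j)
  have NPdef : ∀ x j, NP x j = conjSub (ω (rp x) (ρf x)) (Nch (cpar (rp x)) j) :=
    fun _ _ => rfl
  -- the t = 1 normalisations
  have hrp_t1 : t = 1 → ∀ x, rp x = x := by
    intro h1 x
    obtain ⟨k, hk⟩ := hrp_rel x
    rw [h1, one_pow, mul_one] at hk
    exact hk.symm
  have hρ_t1 : t = 1 → ∀ x, ρf x = 0 := by
    intro h1 x
    refine Nat.find_eq_zero (hrp_rel x) |>.mpr ?_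
    rw [pow_zero, mul_one, hrp_t1 h1]
  have hNP_t1 : t = 1 → ∀ x j, NP x j = Nch (f x) j := by
    intro h1 x j
    have hc : cpar x = f x := by
      show (if t = 1 then f x else hol x) = f x
      rw [if_pos h1]
    rw [NPdef, hρ_t1 h1, hω_zero, conjSub_one, hrp_t1 h1, hc]
  have hc_ne : t ≠ 1 → ∀ y, cpar y = hol y := by
    intro h1 y
    show (if t = 1 then f y else hol y) = hol y
    rw [if_neg h1]
  -- conjugation identities
  have hid_pcomm : ∀ w a b : G, w * pcomm a b * w⁻¹ = pcomm (w*a*w⁻¹) (w*b*w⁻¹) := by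
    intro w a b; simp [pcomm]; group
  have hid_pow : ∀ (w a : G) (k : ℕ), w * a ^ k * w⁻¹ = (w*a*w⁻¹) ^ k := by
    intro w a k
    induction k with
    | zero => simp
    | succ k ih => rw [pow_succ, pow_succ, ← ih]; group
  -- the shift property
  have hshift : ∀ x j, NP (x * t) j = conjSub (f x) (NP x j) := by
    intro x j
    by_cases h1 : t = 1
    · rw [h1, mul_one, hNP_t1 h1 x j]
      exact (chain_conjSub_eq (hNstep (f x)) j).symm
    · have hrpt : rp (x * t) = rp x := by
        have h2 := hrp_mul x 1
        rwa [pow_one] at h2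
      have hspec2 : x * t = rp x * t ^ (ρf x + 1) := by
        rw [pow_succ, ← mul_assoc, ← hρ_spec x]
      rcases lt_or_eq_of_le (Nat.succ_le_of_lt (hρ_lt x)) with hkp | hkp
      · have hρt : ρf (x * t) = ρf x + 1 := by
          refine (Nat.find_eq_iff (hrp_rel (x*t))).mpr ⟨by rw [hrpt]; exact hspec2, ?_⟩
          intro l hl hcon
          rw [hrpt] at hcon
          have h3 : t ^ l = t ^ (ρf x + 1) := mul_left_cancel (hcon.symm.trans hspec2)
          have h4 := hpow_inj h1 l (ρf x + 1) (lt_trans hl hkp) hkp h3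
          omega
        rw [NPdef, hρt, hrpt, hω_succ, ← hρ_spec x, NPdef,
          conjSub_conjSub (f x) (ω (rp x) (ρf x))]
      · rw [Nat.succ_eq_add_one] at hkp
        have hxt : x * t = rp x := by
          rw [hspec2, hkp, hT, mul_one]
        have hLHS : NP (x * t) j = Nch (cpar (rp x)) j := by
          rw [NPdef, hxt, hrp_self, hρ_rp, hω_zero, conjSub_one]
        have hwf : ω (rp x) (ρf x) * f x = cpar (rp x) := by
          rw [hc_ne h1]
          calc ω (rp x) (ρf x) * f x
              = ω (rp x) (ρf x) * f (rp x * t ^ ρf x) := by rw [← hρ_spec x]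
          _ = ω (rp x) (ρf x + 1) := (hω_succ _ _).symm
          _ = hol (rp x) := by rw [hkp]
        rw [hLHS, NPdef, conjSub_conjSub, hwf, chain_conjSub_eq (hNstep _) j]
  -- structural facts
  have hNP_top : ∀ x, NP x 0 = ⊤ := fun x => by rw [NPdef, hN0, conjSub_top]
  have hNP_bot : ∀ x j, m ≤ j → NP x j = ⊥ := by
    intro x j hj
    rw [NPdef, chain_bot (hNstep _) (hNm _) j hj, conjSub_bot]
  have hNP_mono : ∀ x j, NP x (j+1) ≤ NP x j := by
    intro x j a ha
    rw [NPdef, mem_conjSub] at ha ⊢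
    exact (hNstep _ j).le ha
  have hNP_comm : ∀ x j, ∀ a ∈ NP x j, ∀ b ∈ NP x j, pcomm a b ∈ NP x (j+1) := by
    intro x j a ha b hb
    rw [NPdef, mem_conjSub] at ha hb ⊢
    rw [hid_pcomm]
    exact (hNstep _ j).comm _ ha _ hb
  have hNP_pow : ∀ x j, ∀ a ∈ NP x j, a ^ p ∈ NP x (j+1) := by
    intro x j a ha
    rw [NPdef, mem_conjSub] at ha ⊢
    rw [hid_pow]
    exact (hNstep _ j).pow _ ha
  have hNP_hol : ∀ x j, ∀ a ∈ NP x j, pcomm a (hol x) ∈ NP x (j+1) := by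
    intro x j a ha
    by_cases h1 : t = 1
    · rw [hNP_t1 h1] at ha ⊢
      rw [hhol_t1 h1]
      exact chain_pcomm_pow (hNstep (f x)) p j a ha
    · rw [NPdef, mem_conjSub] at ha ⊢
      have hhx : hol x = (ω (rp x) (ρf x))⁻¹ * hol (rp x) * ω (rp x) (ρf x) := by
        conv_lhs => rw [hρ_spec x]
        exact hhol_accum _ _
      have h2 : ω (rp x) (ρf x) * hol x * (ω (rp x) (ρf x))⁻¹ = hol (rp x) := by
        rw [hhx]; group
      rw [hid_pcomm, h2, ← hc_ne h1 (rp x)]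
      exact (hNstep _ j).engc _ ha
  have hccp : ∀ x, (cc ^ p).left x = hol x := fun x => by
    rw [wr_pow_left_apply]
  refine ⟨NP, hNP_top, hNP_bot, hNP_mono, hNP_comm, hNP_pow, hshift, ?_⟩
  intro x j a ha
  rw [hccp]
  exact hNP_hol x j a ha

end EPC

section QW
variable {G : Type*} [Group G] {T : Type*} [CommGroup T]
lemma pcomm_of_comm {u v : T} : pcomm u v = 1 := by
  simp [pcomm, mul_comm, mul_left_comm, mul_assoc]

lemma wr_pcomm_right (a b : (T → G) ⋊[wreathRφ G T] T) : (pcomm a b).right = 1 := by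
  show (a⁻¹ * b⁻¹ * a * b).right = 1
  rw [wr_mul_right, wr_mul_right, wr_mul_right, wr_inv_right, wr_inv_right]
  exact pcomm_of_comm

theorem Qu_wreath {p m : ℕ} (hp : p.Prime) (hT : ∀ u : T, u ^ p = 1) (IH : Qu G p m) :
    Qu ((T → G) ⋊[wreathRφ G T] T) p (p * m + 1) := by
  intro cc
  obtain ⟨NP, hTop, hBot, hMono, hComm, hPow, hShift, hHol⟩ := exists_pointchain hp hT IH cc
  let BPj : ℕ → Subgroup ((T → G) ⋊[wreathRφ G T] T) := fun j => basePart (fun x => NP x j)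
  have memBP : ∀ j a, a ∈ BPj j ↔ (a.right = 1 ∧ ∀ x, a.left x ∈ NP x j) :=
    fun j a => mem_basePart
  -- conjugation stability of the base subgroups
  have hconjmem : ∀ j, ∀ a ∈ BPj j, cc⁻¹ * a * cc ∈ BPj j := by
    intro j a ha
    rw [memBP] at ha ⊢
    obtain ⟨ha1, ha2⟩ := ha
    refine ⟨wr_conj_base_right cc ha1, fun x => ?_⟩
    rw [wr_conj_base_left_apply cc ha1]
    have h2 := hShift (x * cc.right⁻¹) j
    have h3 : (x * cc.right⁻¹) * cc.right = x := by group
    rw [h3] at h2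
    rw [h2, mem_conjSub]
    have h4 : cc.left (x * cc.right⁻¹) *
        ((cc.left (x * cc.right⁻¹))⁻¹ * a.left (x*cc.right⁻¹) * cc.left (x*cc.right⁻¹)) *
        (cc.left (x*cc.right⁻¹))⁻¹ = a.left (x * cc.right⁻¹) := by group
    rw [h4]
    exact ha2 _
  have hconjimem : ∀ j, ∀ a ∈ BPj j, cc * a * cc⁻¹ ∈ BPj j := by
    intro j a ha
    rw [memBP] at ha ⊢
    obtain ⟨ha1, ha2⟩ := ha
    refine ⟨wr_conji_base_right cc ha1, fun x => ?_⟩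
    rw [wr_conji_base_left_apply cc ha1]
    have h5 := ha2 (x * cc.right)
    rw [hShift x j, mem_conjSub] at h5
    exact h5
  have HH : ∀ j, PHyp p cc (BPj j) (BPj (j+1)) := by
    intro j
    refine ⟨basePart_mono (fun x => hMono x j), ?_, ?_, hconjmem j, hconjimem j,
      hconjmem (j+1), hconjimem (j+1), ?_⟩
    · intro a ha b hb
      rw [memBP] at ha hb ⊢
      obtain ⟨ha1, ha2⟩ := ha
      obtain ⟨hb1, hb2⟩ := hb
      refine ⟨base_pcomm_right ha1 hb1, fun x => ?_⟩
      rw [base_pcomm_left_apply ha1 hb1]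
      exact hComm x j _ (ha2 x) _ (hb2 x)
    · intro a ha
      rw [memBP] at ha ⊢
      obtain ⟨ha1, ha2⟩ := ha
      refine ⟨by rw [wr_pow_right, ha1, one_pow], fun x => ?_⟩
      rw [base_pow_left_apply ha1]
      exact hPow x j _ (ha2 x)
    · intro a ha
      rw [memBP] at ha ⊢
      obtain ⟨ha1, ha2⟩ := ha
      have hccp1 : (cc ^ p).right = 1 := by rw [wr_pow_right]; exact hT _
      refine ⟨base_pcomm_right ha1 hccp1, fun x => ?_⟩
      rw [base_pcomm_left_apply ha1 hccp1]
      exact hHol x j _ (ha2 x)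
  -- the chain
  refine ⟨fun k => Nat.casesOn k ⊤ (fun k' => (HH (k'/p)).Kb (p - k' % p)), rfl, ?_, ?_⟩
  · -- bottom
    show (HH ((p*m)/p)).Kb (p - (p*m) % p) = ⊥
    have h1 : p * m / p = m := Nat.mul_div_cancel_left m hp.pos
    have h2 : p * m % p = 0 := Nat.mul_mod_right p m
    rw [h1, h2, Nat.sub_zero, PHyp.Kb_p_eq _ hp]
    exact basePart_bot _ (fun x => hBot x m le_rfl)
  · -- the steps
    intro k
    cases k with
    | zero =>
      show StepCond p cc ⊤ ((HH (0/p)).Kb (p - 0 % p))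
      have h1 : (0:ℕ)/p = 0 := Nat.zero_div p
      have h2 : (0:ℕ) % p = 0 := Nat.zero_mod p
      rw [h1, h2, Nat.sub_zero, PHyp.Kb_p_eq _ hp]
      refine ⟨le_top, ?_, ?_, ?_, ?_⟩
      · intro a _ b _
        rw [memBP]
        exact ⟨wr_pcomm_right a b, fun x => by rw [hTop]; trivial⟩
      · intro a _
        rw [memBP]
        refine ⟨by rw [wr_pow_right]; exact hT _, fun x => by rw [hTop]; trivial⟩
      · intro a _
        rw [memBP]
        exact ⟨wr_pcomm_right a cc, fun x => by rw [hTop]; trivial⟩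
      · intro a _
        rw [memBP]
        exact ⟨wr_pcomm_right a cc⁻¹, fun x => by rw [hTop]; trivial⟩
    | succ k' =>
      show StepCond p cc ((HH (k'/p)).Kb (p - k' % p)) ((HH ((k'+1)/p)).Kb (p - (k'+1) % p))
      have hi : k' % p < p := Nat.mod_lt _ hp.pos
      obtain ⟨q, hq⟩ : ∃ q, p * (k'/p) = q := ⟨_, rfl⟩
      have hdm : q + k' % p = k' := by rw [← hq]; exact Nat.div_add_mod k' p
      by_cases hb : k' % p = p - 1
      · -- boundary step
        have e1 : k' + 1 = p * (k'/p + 1) := by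
          rw [Nat.mul_succ, hq]
          omega
        have hdiv : (k'+1)/p = k'/p + 1 := by rw [e1, Nat.mul_div_cancel_left _ hp.pos]
        have hmod : (k'+1) % p = 0 := by rw [e1]; exact Nat.mul_mod_right p _
        have hone : p - k' % p = 1 := by omega
        rw [hone, hdiv, hmod, Nat.sub_zero, PHyp.Kb_p_eq (HH (k'/p + 1)) hp]
        exact (HH (k'/p)).step_bottom
      · -- inner step
        have hmod : (k'+1) % p = k' % p + 1 := by
          have h3 : (k'+1) % p = (k' % p + 1 % p) % p := Nat.add_mod k' 1 p
          have h4 : 1 % p = 1 := Nat.mod_eq_of_lt hp.one_lt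
          have h5 : k' % p + 1 < p := by omega
          rw [h3, h4, Nat.mod_eq_of_lt h5]
        have hdiv : (k'+1)/p = k'/p := by
          have h5 : k' % p + 1 < p := by omega
          have e1 : k' + 1 = (k' % p + 1) + q := by omega
          rw [e1, ← hq, Nat.add_mul_div_left _ _ hp.pos, Nat.div_eq_of_lt h5, Nat.zero_add]
        rw [hmod, hdiv]
        have e2 : p - k' % p = (p - (k' % p + 1)) + 1 := by omega
        rw [e2]
        exact (HH (k'/p)).step_Kb _

end QW

/-- The trivial group satisfies `Qu` with chain length 0. -/
lemma Qu_of_trivial (Wg : Type*) [Group Wg] (hs : ∀ x : Wg, x = 1) (p : ℕ) : Qu Wg p 0 := by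
  intro c
  refine ⟨fun _ => ⊥, ?_, rfl, ?_⟩
  · ext x
    simp [hs x]
  · intro j
    refine ⟨le_refl _, ?_, ?_, ?_, ?_⟩ <;>
      · intro x hx
        first
        | (intro y hy
           rw [Subgroup.mem_bot] at hx hy ⊢
           rw [hx, hy]
           simp [pcomm])
        | (rw [Subgroup.mem_bot] at hx ⊢
           rw [hx]
           simp [pcomm])

lemma geom_step {p : ℕ} (hp : p.Prime) (n : ℕ) :
    (p ^ (n+1) - 1) / (p - 1) = p * ((p ^ n - 1) / (p - 1)) + 1 := by
  have hdvd : (p - 1) ∣ (p ^ n - 1) := by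
    have := Nat.sub_dvd_pow_sub_pow p 1 n
    rwa [one_pow] at this
  have hp1 : 0 < p - 1 := by have := hp.two_le; omega
  obtain ⟨e, hedef⟩ : ∃ e, (p ^ n - 1) / (p - 1) = e := ⟨_, rfl⟩
  rw [hedef]
  have he : (p - 1) * e = p ^ n - 1 := by rw [← hedef]; exact Nat.mul_div_cancel' hdvd
  have hkey : p ^ (n+1) - 1 = (p * e + 1) * (p - 1) := by
    have h1 : 1 ≤ p ^ n := Nat.one_le_pow _ _ hp.pos
    have h2 : 1 ≤ p ^ (n+1) := Nat.one_le_pow _ _ hp.pos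
    have h3 : 1 ≤ p := hp.one_le
    zify [h1, h2, h3] at he ⊢
    have hps : (p:ℤ) ^ (n+1) = (p:ℤ) ^ n * p := by ring
    rw [hps]
    linear_combination (-(p : ℤ)) * he
  rw [hkey, Nat.mul_div_cancel _ hp1]

lemma QuW (p : ℕ) (hp : p.Prime) (A : ℕ → Type) [∀ i, CommGroup (A i)]
    (hexp : ∀ (i : ℕ) (a : A i), a ^ p = 1) :
    ∀ n, Qu (W A n) p ((p ^ n - 1) / (p - 1)) := by
  intro n
  induction n with
  | zero =>
    have h0 : (p ^ 0 - 1) / (p - 1) = 0 := by simp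
    rw [h0]
    haveI : Subsingleton (W A 0) := inferInstanceAs (Subsingleton PUnit)
    exact Qu_of_trivial _ (fun x => Subsingleton.elim x 1) p
  | succ n ih =>
    rw [geom_step hp n]
    exact Qu_wreath (G := W A n) (T := A n) hp (hexp n) ih

end Engel9

/-- If each `A_i` is an elementary abelian `p`-group, the iterated wreath
product `W_n` is a `((p^n − 1)/(p − 1))`-Engel group. -/
theorem stmt9 (p : ℕ) (hp : p.Prime) (A : ℕ → Type) [∀ i, CommGroup (A i)]
    (hexp : ∀ (i : ℕ) (a : A i), a ^ p = 1) (n : ℕ) (g h : W A n) :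
    engel g h ((p ^ n - 1) / (p - 1)) = 1 :=
  Engel9.engel_of_Qu (Engel9.QuW p hp A hexp n) g h
end

section
/- Let W_n be the n-fold iterated permutational wreath product of elementary abelian p-groups A_0,…,A_{n−1} (W_0 = 1, W_{k+1} = W_k ≀ A_k), realized as automorphisms of the finite rooted tree of depth n with levels A_{n−1},…,A_0. If g ∈ St(k) (the pointwise stabilizer of level k) and h ∈ W_n is arbitrary, then [g,_{p^k} h] ∈ St(k+1). -/
/-- The pointwise stabilizer `St(k)` of the `k`-th level of the finite rooted
tree on which `W_n` acts: `St(k+1)` consists of the elements of the base group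
`W_n^{A_n} ≤ W_{n+1}` all of whose components lie in `St_{W_n}(k)`. -/
noncomputable def St (A : ℕ → Type) [∀ i, CommGroup (A i)] : (n k : ℕ) → Subgroup (W A n)
  | 0, _ => ⊤
  | _ + 1, 0 => ⊤
  | n + 1, k + 1 =>
    Subgroup.map
      (SemidirectProduct.inl (N := A n → W A n) (G := A n)
        (φ := wreathRφ (W A n) (A n)))
      (Subgroup.pi Set.univ fun _ => St A n k)

/-! ### generic lemmas -/

lemma map_pcomm {F G H : Type*} [Group G] [Group H] [FunLike F G H]
    [MonoidHomClass F G H] (f : F) (x y : G) :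
    f (pcomm x y) = pcomm (f x) (f y) := by
  simp [pcomm]

lemma map_engel {F G H : Type*} [Group G] [Group H] [FunLike F G H]
    [MonoidHomClass F G H] (f : F) (x y : G) (m : ℕ) :
    f (engel x y m) = engel (f x) (f y) m := by
  induction m with
  | zero => rfl
  | succ m ih => rw [engel, engel, map_pcomm, ih]

lemma engel_one {G : Type*} [Group G] (y : G) (m : ℕ) : engel 1 y m = 1 := by
  induction m with
  | zero => rfl
  | succ m ih => rw [engel, ih]; simp [pcomm]

lemma wreathRφ_apply {G T : Type*} [Group G] [Group T] (t : T) (f : T → G) (x : T) :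
    wreathRφ G T t f x = f (x * t) := rfl

lemma wreathRφ_inv_apply {G T : Type*} [Group G] [Group T] (t : T) (f : T → G) (x : T) :
    (wreathRφ G T t)⁻¹ f x = f (x * t⁻¹) := rfl

/-! ### The abstract Engel lemma -/

/-- If `M` is a normal abelian subgroup of exponent `p` of a group `G`, and `x ∈ M`,
then `[x,_{p^j} y] = [x, y^{p^j}]`. -/
theorem engel_eq_pcomm_pow {G : Type*} [Group G] {p : ℕ} (hp : p.Prime)
    {M : Subgroup G} (hN : M.Normal)
    (hcomm : ∀ a b : M, a * b = b * a) (hexpM : ∀ a : M, a ^ p = 1)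
    {x : G} (hx : x ∈ M) (y : G) (j : ℕ) :
    engel x y (p ^ j) = pcomm x (y ^ p ^ j) := by
  have hcommG : ∀ a b : G, a ∈ M → b ∈ M → Commute a b := by
    intro a b ha hb
    exact congrArg Subtype.val (hcomm ⟨a, ha⟩ ⟨b, hb⟩)
  by_cases htriv : ∀ a : M, a = 1
  · have hx1 : x = 1 := congrArg Subtype.val (htriv ⟨x, hx⟩)
    subst hx1
    rw [engel_one]
    simp [pcomm]
  · push_neg at htriv
    obtain ⟨a0, ha0⟩ := htriv
    letI : CommGroup M := { (inferInstance : Group M) with mul_comm := hcomm }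
    -- the conjugation endomorphism on `Additive M`
    let μ : M →* M := {
      toFun := fun v => ⟨y⁻¹ * (v : G) * y, by
        simpa using hN.conj_mem (v : G) v.2 y⁻¹⟩
      map_one' := by ext; simp
      map_mul' := fun a b => by ext; simp; group }
    let τ : AddMonoid.End (Additive M) := MonoidHom.toAdditive μ
    have τ_apply : ∀ v : Additive M,
        ((τ v).toMul : G) = y⁻¹ * (v.toMul : G) * y := fun _ => rfl
    -- `CharP p` for the endomorphism ring
    haveI : Fact p.Prime := ⟨hp⟩
    have hsmul : ∀ v : Additive M, p • v = 0 := by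
      intro v
      have := hexpM v.toMul
      apply Additive.toMul.injective
      simpa using this
    haveI : CharP (AddMonoid.End (Additive M)) p := by
      constructor
      intro m
      constructor
      · intro hm
        have h1 : m • (Additive.ofMul a0) = 0 := by
          have := congrArg (fun f : AddMonoid.End (Additive M) => f (Additive.ofMul a0)) hm
          simpa [AddMonoid.End.natCast_apply] using this
        have h2 : addOrderOf (Additive.ofMul a0) ∣ m :=
          addOrderOf_dvd_of_nsmul_eq_zero h1
        have h3 : addOrderOf (Additive.ofMul a0) ∣ p :=
          addOrderOf_dvd_of_nsmul_eq_zero (hsmul _)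
        have h4 : (Additive.ofMul a0) ≠ (0 : Additive M) := by
          intro hc
          exact ha0 (by simpa using congrArg Additive.toMul hc)
        have h5 : addOrderOf (Additive.ofMul a0) = p :=
          addOrderOf_eq_prime (hsmul _) h4
        rwa [h5] at h2
      · rintro ⟨c, rfl⟩
        have hpz : ((p : ℕ) : AddMonoid.End (Additive M)) = 0 := by
          refine DFunLike.ext _ _ fun v => ?_
          simpa [AddMonoid.End.natCast_apply] using hsmul v
        push_cast
        rw [hpz, zero_mul]
    -- engel as `(τ - 1)^m`
    have claim : ∀ (m : ℕ) (v : M),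
        (((((τ - 1) ^ m) (Additive.ofMul v)).toMul : M) : G) = engel (v : G) y m := by
      intro m
      induction m with
      | zero => intro v; simp [engel]
      | succ m ih =>
        intro v
        rw [pow_succ']
        set w : Additive M := ((τ - 1) ^ m) (Additive.ofMul v) with hw
        have happ : ((τ - 1) * (τ - 1) ^ m) (Additive.ofMul v) = τ w - w := by
          show (τ - 1) w = τ w - w
          rfl
        rw [happ, engel, ← ih]
        set e : M := w.toMul with he
        have hsub : ((τ w - w).toMul : G) = (y⁻¹ * (e : G) * y) * (e : G)⁻¹ := by
          rw [toMul_sub, div_eq_mul_inv]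
          simp only [MulMemClass.coe_mul, InvMemClass.coe_inv]
          rw [τ_apply]
        rw [hsub, pcomm]
        have hconj : y⁻¹ * (e : G) * y ∈ M := by
          simpa using hN.conj_mem (e : G) e.2 y⁻¹
        have := hcommG _ _ hconj (inv_mem e.2 : ((e : G))⁻¹ ∈ M)
        rw [this]
        group
    -- powers of τ
    have claim2 : ∀ (m : ℕ) (v : M),
        ((((τ ^ m) (Additive.ofMul v)).toMul : M) : G) = (y ^ m)⁻¹ * (v : G) * y ^ m := by
      intro m
      induction m with
      | zero => intro v; simp
      | succ m ih =>
        intro v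
        rw [pow_succ']
        have happ : (τ * τ ^ m) (Additive.ofMul v) = τ ((τ ^ m) (Additive.ofMul v)) := rfl
        rw [happ, τ_apply, ih]
        group
    -- Frobenius
    have hfrob : (τ - 1) ^ p ^ j = τ ^ p ^ j - 1 := by
      have := sub_pow_char_pow_of_commute (p := p) (Commute.one_right τ) (n := j)
      simpa using this
    -- conclude
    have hfin := claim (p ^ j) ⟨x, hx⟩
    rw [hfrob] at hfin
    have hsplit : ((τ ^ p ^ j - 1) (Additive.ofMul (⟨x, hx⟩ : M)))
        = (τ ^ p ^ j) (Additive.ofMul (⟨x, hx⟩ : M)) - Additive.ofMul (⟨x, hx⟩ : M) := by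
      rfl
    rw [hsplit, toMul_sub, div_eq_mul_inv] at hfin
    simp only [MulMemClass.coe_mul, InvMemClass.coe_inv, toMul_ofMul] at hfin
    rw [claim2] at hfin
    rw [← hfin, pcomm]
    have hconj : (y ^ p ^ j)⁻¹ * x * y ^ p ^ j ∈ M := by
      simpa using hN.conj_mem x hx (y ^ p ^ j)⁻¹
    have hc := hcommG _ _ hconj (inv_mem hx : x⁻¹ ∈ M)
    rw [show ((⟨x, hx⟩ : M) : G) = x from rfl, hc.eq]
    group

/-! ### Structural lemmas about `W` and `St` -/

variable (A : ℕ → Type) [∀ i, CommGroup (A i)]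

/-- Identity mul-equiv between `W A (n+1)` and the semidirect product. -/
noncomputable def sd (n : ℕ) :
    W A (n+1) ≃* ((A n → W A n) ⋊[wreathRφ (W A n) (A n)] A n) := MulEquiv.refl _

lemma St_zero (n : ℕ) : St A n 0 = ⊤ := by cases n <;> rfl

lemma mem_St_succ {n k : ℕ} {x : W A (n+1)} :
    x ∈ St A (n+1) (k+1) ↔
      (∀ v, (sd A n x).left v ∈ St A n k) ∧ (sd A n x).right = 1 := by
  show x ∈ Subgroup.map (SemidirectProduct.inl (φ := wreathRφ (W A n) (A n)))
      (Subgroup.pi Set.univ fun _ => St A n k) ↔ _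
  constructor
  · rintro ⟨u, hu, rfl⟩
    exact ⟨fun v => hu v (Set.mem_univ v), rfl⟩
  · rintro ⟨h1, h2⟩
    refine ⟨(sd A n x).left, fun v _ => h1 v, ?_⟩
    show SemidirectProduct.inl (sd A n x).left = sd A n x
    ext
    · simp
    · simp [h2.symm]

lemma St_normal (n k : ℕ) : (St A n k).Normal := by
  induction n generalizing k with
  | zero =>
    have : St A 0 k = ⊤ := rfl
    rw [this]; infer_instance
  | succ n ih =>
    cases k with
    | zero => rw [St_zero]; infer_instance
    | succ k =>
      constructor
      intro x hx h
      rw [mem_St_succ] at hx ⊢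
      obtain ⟨h1, h2⟩ := hx
      have hmap : sd A n (h * x * h⁻¹) = sd A n h * sd A n x * (sd A n h)⁻¹ := by
        simp
      rw [hmap]
      constructor
      · intro v
        simp only [SemidirectProduct.mul_left, SemidirectProduct.mul_right,
          SemidirectProduct.inv_left, SemidirectProduct.inv_right, h2,
          wreathRφ_apply, wreathRφ_inv_apply, Pi.mul_apply, Pi.inv_apply,
          map_mul, map_inv, mul_one, mul_inv_cancel_right]
        exact (ih k).conj_mem _ (h1 _) _
      · simp [h2]

lemma inl_left_eq {N G : Type*} [Group N] [Group G] {φ : G →* MulAut N}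
    {x : N ⋊[φ] G} (h : x.right = 1) : SemidirectProduct.inl x.left = x := by
  ext
  · simp
  · simp [h.symm]

lemma pcomm_pi_apply {ι : Type*} {H : ι → Type*} [∀ i, Group (H i)]
    (f g : ∀ i, H i) (i : ι) : pcomm f g i = pcomm (f i) (g i) := rfl

lemma pcomm_mem_St (p : ℕ) {n k : ℕ} {g g' : W A n} (hg : g ∈ St A n k)
    (hg' : g' ∈ St A n k) : pcomm g g' ∈ St A n (k + 1) := by
  induction n generalizing k with
  | zero => exact (show St A 0 (k+1) = ⊤ from rfl) ▸ Subgroup.mem_top _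
  | succ n ih =>
    cases k with
    | zero =>
      rw [mem_St_succ]
      refine ⟨fun v => by rw [St_zero]; trivial, ?_⟩
      rw [map_pcomm]
      show (pcomm (sd A n g) (sd A n g')).right = 1
      simp only [pcomm, SemidirectProduct.mul_right, SemidirectProduct.inv_right]
      simp [mul_comm, mul_left_comm]
    | succ k =>
      rw [mem_St_succ] at hg hg' ⊢
      obtain ⟨hg1, hg2⟩ := hg
      obtain ⟨hg'1, hg'2⟩ := hg'
      rw [map_pcomm, ← inl_left_eq hg2, ← inl_left_eq hg'2,
        ← map_pcomm]
      refine ⟨fun v => ?_, by simp⟩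
      simp only [SemidirectProduct.left_inl, pcomm_pi_apply]
      exact ih (hg1 v) (hg'1 v)

lemma pow_mem_St (p : ℕ) (hexp : ∀ (i : ℕ) (a : A i), a ^ p = 1) {n k : ℕ}
    {g : W A n} (hg : g ∈ St A n k) : g ^ p ∈ St A n (k + 1) := by
  induction n generalizing k with
  | zero => exact (show St A 0 (k+1) = ⊤ from rfl) ▸ Subgroup.mem_top _
  | succ n ih =>
    cases k with
    | zero =>
      rw [mem_St_succ]
      refine ⟨fun v => by rw [St_zero]; trivial, ?_⟩
      rw [map_pow]
      have := map_pow (SemidirectProduct.rightHom) (sd A n g) p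
      show SemidirectProduct.rightHom ((sd A n g) ^ p) = 1
      rw [this, hexp n]
    | succ k =>
      rw [mem_St_succ] at hg ⊢
      obtain ⟨hg1, hg2⟩ := hg
      rw [map_pow, ← inl_left_eq hg2, ← map_pow]
      refine ⟨fun v => ?_, by simp [← map_pow]⟩
      simp only [SemidirectProduct.left_inl, Pi.pow_apply]
      exact ih (hg1 v)

lemma pow_pow_mem_St (p : ℕ) (hexp : ∀ (i : ℕ) (a : A i), a ^ p = 1)
    (n k : ℕ) (h : W A n) : h ^ p ^ k ∈ St A n k := by
  induction k with
  | zero => rw [St_zero]; trivial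
  | succ k ih =>
    rw [pow_succ, pow_mul]
    exact pow_mem_St A p hexp ih

open scoped commutatorElement in
lemma pcomm_eq_one_iff_commute {G : Type*} [Group G] (a b : G) :
    pcomm a b = 1 ↔ Commute a b := by
  have h1 : pcomm a b = ⁅a⁻¹, b⁻¹⁆ := by
    simp [pcomm, commutatorElement_def]
  rw [h1, commutatorElement_eq_one_iff_commute]
  constructor
  · intro h2; simpa using h2.inv_inv
  · intro h2; exact h2.inv_inv

/-- If `g ∈ St(k)` and `h ∈ W_n` is arbitrary, then `[g,_{p^k} h] ∈ St(k+1)`. -/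
theorem stmt11 (p : ℕ) (hp : p.Prime) (A : ℕ → Type) [∀ i, CommGroup (A i)]
    (hexp : ∀ (i : ℕ) (a : A i), a ^ p = 1) (n k : ℕ) (g : W A n)
    (hg : g ∈ St A n k) (h : W A n) :
    engel g h (p ^ k) ∈ St A n (k + 1) := by
  haveI : (St A n (k+1)).Normal := St_normal A n (k+1)
  set π := QuotientGroup.mk' (St A n (k+1)) with hπ
  have hker : ∀ z : W A n, π z = 1 ↔ z ∈ St A n (k+1) := fun z =>
    QuotientGroup.eq_one_iff z
  set M := (St A n k).map π with hMdef
  have hMn : M.Normal :=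
    Subgroup.Normal.map (St_normal A n k) π (QuotientGroup.mk'_surjective _)
  have hMcomm : ∀ a b : M, a * b = b * a := by
    rintro ⟨a, g1, hg1, rfl⟩ ⟨b, g2, hg2, rfl⟩
    apply Subtype.ext
    show π g1 * π g2 = π g2 * π g1
    have hc : pcomm g1 g2 ∈ St A n (k+1) := pcomm_mem_St A p hg1 hg2
    have h1 : π (pcomm g1 g2) = 1 := (hker _).mpr hc
    rw [map_pcomm] at h1
    exact ((pcomm_eq_one_iff_commute _ _).mp h1).eq
  have hMexp : ∀ a : M, a ^ p = 1 := by
    rintro ⟨a, g1, hg1, rfl⟩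
    apply Subtype.ext
    show (π g1) ^ p = 1
    rw [← map_pow]
    exact (hker _).mpr (pow_mem_St A p hexp hg1)
  have hgM : π g ∈ M := ⟨g, hg, rfl⟩
  have key := engel_eq_pcomm_pow hp hMn hMcomm hMexp hgM (π h) k
  have e1 : π (engel g h (p ^ k)) = engel (π g) (π h) (p ^ k) :=
    map_engel π g h (p ^ k)
  have e2 : pcomm (π g) ((π h) ^ p ^ k) = π (pcomm g (h ^ p ^ k)) := by
    rw [map_pcomm, map_pow]
  have e3 : π (pcomm g (h ^ p ^ k)) = 1 :=
    (hker _).mpr (pcomm_mem_St A p hg (pow_pow_mem_St A p hexp n k h))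
  exact (hker _).mp (by rw [e1, key, e2, e3])
end

section
/- Let p be a prime, r ∈ ℕ, X = C_p^r with generating set Ẽ = ∪_i ⟨e_i⟩ for a basis {e_1,…,e_r}. Let T be the p^r-regular rooted tree over the constant alphabet X, and let b ∈ Aut(T) be the automorphism fixing the first level, defined recursively by b|_{id} = b, b|_{v_i} = e_i for a fixed basis V = {v_1,…,v_r} (with each v_i an element of maximal Ẽ-word length r in X acting on the first letter), and b|_x = id otherwise. Then b has order p. -/
/-- Word length of `g` with respect to a generating set `S`. -/
noncomputable def wordLength {G : Type*} [Group G] (S : Set G) (g : G) : ℕ :=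
  sInf {n | ∃ l : List G, (∀ x ∈ l, x ∈ S ∪ S⁻¹) ∧ l.length = n ∧ l.prod = g}

/-- The action on the regular rooted tree over the alphabet `X` (vertices are
strings, i.e. lists) of the automorphism `b` defined recursively by the
sections `b|_{id} = b`, `b|_{v_i} = e_i` (each `e_i` acting by right
multiplication on the first letter) and `b|_x = id` otherwise. It fixes the
first level. -/
noncomputable def bAct {X : Type*} [Group X] [DecidableEq X] {r : ℕ}
    (v e : Fin r → X) : List X → List X
  | [] => []
  | x :: l =>
    if x = 1 then x :: bAct v e l
    else if h : ∃ i, v i = x then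
      x :: (match l with
            | [] => ([] : List X)
            | y :: l' => (y * e h.choose) :: l')
    else x :: l

variable {X : Type*} [Group X] [DecidableEq X] {r : ℕ} (v e : Fin r → X)

lemma bAct_nil : bAct v e [] = [] := by simp [bAct]

lemma bAct_cons_one (l : List X) : bAct v e (1 :: l) = 1 :: bAct v e l := by
  simp [bAct]

lemma bAct_cons_v {x : X} (hx : x ≠ 1) (h : ∃ i, v i = x) (y : X) (l : List X) :
    bAct v e (x :: y :: l) = x :: (y * e h.choose) :: l := by
  simp [bAct, hx, h]

lemma bAct_cons_v_nil {x : X} (hx : x ≠ 1) (h : ∃ i, v i = x) :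
    bAct v e [x] = [x] := by
  simp [bAct, hx, h]

lemma bAct_cons_other {x : X} (hx : x ≠ 1) (h : ¬ ∃ i, v i = x) (l : List X) :
    bAct v e (x :: l) = x :: l := by
  simp [bAct, hx, h]

lemma bAct_iter_cons_one (n : ℕ) (l : List X) :
    (bAct v e)^[n] (1 :: l) = 1 :: (bAct v e)^[n] l := by
  induction n with
  | zero => rfl
  | succ n ih =>
    rw [Function.iterate_succ_apply', Function.iterate_succ_apply', ih, bAct_cons_one]

lemma bAct_iter_cons_v {x : X} (hx : x ≠ 1) (h : ∃ i, v i = x) (y : X) (l : List X) (n : ℕ) :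
    (bAct v e)^[n] (x :: y :: l) = x :: (y * (e h.choose) ^ n) :: l := by
  induction n with
  | zero => simp
  | succ n ih =>
    rw [Function.iterate_succ_apply', ih, bAct_cons_v v e hx h, pow_succ, mul_assoc]

lemma bAct_iter_fix (p : ℕ) (he : ∀ i, e i ^ p = 1) : ∀ l : List X, (bAct v e)^[p] l = l := by
  intro l
  induction l with
  | nil => rw [Function.iterate_fixed (bAct_nil v e)]
  | cons x l ih =>
    by_cases hx : x = 1
    · subst hx; rw [bAct_iter_cons_one, ih]
    · by_cases h : ∃ i, v i = x
      · cases l with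
        | nil => rw [Function.iterate_fixed (bAct_cons_v_nil v e hx h)]
        | cons y l' => rw [bAct_iter_cons_v v e hx h, he, mul_one]
      · rw [Function.iterate_fixed (bAct_cons_other v e hx h l)]


/-- Let `X = C_p^r` with generators `e_i` and let `V = {v_1, …, v_r}` be a basis
of `X` consisting of elements of maximal word length `r` with respect to
`Ẽ = ∪_i ⟨e_i⟩`. Then the automorphism `b` of the `p^r`-regular rooted tree
defined by the sections `b|_{id} = b`, `b|_{v_i} = e_i`, `b|_x = id` has order
`p`. -/
theorem stmt16 (p r : ℕ) (hp : p.Prime) (hr : 0 < r)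
    (v : Fin r → Multiplicative (Fin r → ZMod p))
    (hvinj : Function.Injective v)
    (hvbasis : Subgroup.closure (Set.range v) = ⊤)
    (hvlen : ∀ i : Fin r,
      wordLength (⋃ j : Fin r,
        (Subgroup.zpowers
          (Multiplicative.ofAdd (Pi.single j (1 : ZMod p)) :
            Multiplicative (Fin r → ZMod p)) :
          Set (Multiplicative (Fin r → ZMod p)))) (v i) = r) :
    (bAct v (fun i => Multiplicative.ofAdd (Pi.single i (1 : ZMod p))))^[p] = id ∧
      bAct v (fun i => Multiplicative.ofAdd (Pi.single i (1 : ZMod p))) ≠ id := by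
  
  haveI : Fact p.Prime := ⟨hp⟩
  set e : Fin r → Multiplicative (Fin r → ZMod p) :=
    fun i => Multiplicative.ofAdd (Pi.single i (1 : ZMod p)) with he_def
  have he : ∀ i, e i ^ p = 1 := by
    intro i
    have : (p : ZMod p) = 0 := ZMod.natCast_self p
    simp [he_def, ← ofAdd_nsmul, ← Pi.single_smul, nsmul_eq_mul, this]
  have he1 : ∀ i, e i ≠ 1 := by
    intro i hone
    have : (Pi.single i (1 : ZMod p) : Fin r → ZMod p) = 0 := by
      simpa [he_def] using hone
    have := congrFun this i
    simp at this
  -- v i ≠ 1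
  have hv1 : ∀ i, v i ≠ 1 := by
    intro i hv
    have : wordLength (⋃ j : Fin r,
        (Subgroup.zpowers (e j) : Set (Multiplicative (Fin r → ZMod p)))) (v i) = 0 := by
      apply Nat.eq_zero_of_le_zero
      apply Nat.sInf_le
      exact ⟨[], by simp, rfl, by simp [hv]⟩
    rw [hvlen i] at this
    omega
  constructor
  · funext l
    exact bAct_iter_fix v e p he l
  · intro hid
    set i : Fin r := ⟨0, hr⟩
    have h : ∃ j, v j = v i := ⟨i, rfl⟩
    have key := bAct_cons_v v e (hv1 i) h 1 []
    rw [hid] at key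
    simp at key
    have : h.choose = i := hvinj h.choose_spec
    rw [this] at key
    exact he1 i key.symm
end
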